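/- arXiv:2501.12158 — 2 statements merged into one kernel-verified Lean document; each statement's English description precedes it below -/
import Mathlib

section
/- Assume F ⊆ Hom(S¹) and that the collection K_F of F-invariant minimal sets is finite. Then for every x ∈ S¹ there exist K₁, K₂ ∈ K_F such that the orbit O_F(x) does not intersect any element of K_F \ {K₁, K₂}. -/
open MeasureTheory Set Function Filter Topology
open scoped ENNReal NNReal

noncomputable section

/-- The circle, modeled as `ℝ/ℤ`, with its (arc-length) quotient metric. -/
abbrev S1 : Type := AddCircle (1 : ℝ)

/-- The representative in `[0,1)` of a point of the circle. -/
def argS1 (x : S1) : ℝ := (AddCircle.equivIco 1 0 x : ℝ)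

/-- The open arc traversed counterclockwise from `a` to `b`. -/
def openArc (a b : S1) : Set S1 := {x | 0 < argS1 (x - a) ∧ argS1 (x - a) < argS1 (b - a)}

/-- The closed arc traversed counterclockwise from `a` to `b`; note `[a,a] = {a}`. -/
def closedArc (a b : S1) : Set S1 := insert a (insert b (openArc a b))

/-- Homeomorphisms of the circle. -/
abbrev HomS1 : Type := S1 ≃ₜ S1

/-- A circle homeomorphism is orientation preserving if it maps counterclockwise open
arcs onto counterclockwise open arcs. -/
def OrientationPreserving (f : HomS1) : Prop :=
  ∀ a b : S1, f '' openArc a b = openArc (f a) (f b)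

/-- Membership in the semigroup generated by `F` (all finite compositions of members). -/
inductive InSemigroup (F : Set HomS1) : HomS1 → Prop
  | base : ∀ f ∈ F, InSemigroup F f
  | comp : ∀ f g : HomS1, InSemigroup F f → InSemigroup F g → InSemigroup F (g.trans f)

/-- The semigroup `G_F` generated by `F`, as a set of homeomorphisms. -/
def semigroupOf (F : Set HomS1) : Set HomS1 := {g | InSemigroup F g}

/-- The orbit of `x` under the semigroup generated by `F`. -/
def orbitOf (F : Set HomS1) (x : S1) : Set S1 := {y | ∃ g ∈ semigroupOf F, g x = y}

/-- The semigroup generated by `F` has no finite orbit. -/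
def NoFiniteOrbit (F : Set HomS1) : Prop := ∀ x : S1, (orbitOf F x).Infinite

/-- A set `K` is `F`-invariant if every `f ∈ F` maps it into itself. -/
def InvariantUnder (F : Set HomS1) (K : Set S1) : Prop := ∀ f ∈ F, f '' K ⊆ K

/-- A nonempty closed `F`-invariant set having no nonempty closed `F`-invariant
proper subset. -/
def IsMinimalInvariant (F : Set HomS1) (K : Set S1) : Prop :=
  K.Nonempty ∧ IsClosed K ∧ InvariantUnder F K ∧
    ∀ K' ⊆ K, K'.Nonempty → IsClosed K' → InvariantUnder F K' → K' = K

/-- The collection `K_F` of `F`-invariant minimal sets. -/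
def minimalSets (F : Set HomS1) : Set (Set S1) := {K | IsMinimalInvariant F K}

/-- The semigroup generated by `F` acts proximally on `I`. -/
def ProximalOn (F : Set HomS1) (I : Set S1) : Prop :=
  ∀ x ∈ I, ∀ y ∈ I, ∃ g : ℕ → HomS1, (∀ n, g n ∈ semigroupOf F) ∧
    Tendsto (fun n => dist (g n x) (g n y)) atTop (𝓝 0)

/-- `L` is a finite union of closed arcs with endpoints in `K`. -/
def FiniteUnionOfArcsWithEndsIn (K L : Set S1) : Prop :=
  ∃ (n : ℕ) (a b : Fin n → S1), (∀ k, a k ∈ K) ∧ (∀ k, b k ∈ K) ∧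
    L = ⋃ k, closedArc (a k) (b k)

/-- `L` is a finite union of closed arcs. -/
def FiniteUnionOfClosedArcs (L : Set S1) : Prop :=
  ∃ (n : ℕ) (a b : Fin n → S1), L = ⋃ k, closedArc (a k) (b k)

/-- The number of connected components of `L ⊆ S¹`. -/
def numComponents (L : Set S1) : ℕ :=
  {C : Set S1 | ∃ x ∈ L, C = connectedComponentIn L x}.ncard

/-- `x` precedes `y` in the counterclockwise order of an arc starting at `a`. -/
def arcLE (a x y : S1) : Prop := argS1 (x - a) ≤ argS1 (y - a)

/-- `u` is monotone increasing on the closed arc `[a,b]` (counterclockwise order). -/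
def MonotoneIncrOnArc (u : S1 → ℝ) (a b : S1) : Prop :=
  ∀ x ∈ closedArc a b, ∀ y ∈ closedArc a b, arcLE a x y → u x ≤ u y

/-- `u` is monotone decreasing on the closed arc `[a,b]` (counterclockwise order). -/
def MonotoneDecrOnArc (u : S1 → ℝ) (a b : S1) : Prop :=
  ∀ x ∈ closedArc a b, ∀ y ∈ closedArc a b, arcLE a x y → u y ≤ u x

/-- A closed arc with endpoints in the minimal set `K` and disjoint from every other
minimal set of `F`. -/
def IsGapArc (F : Set HomS1) (K I : Set S1) : Prop :=
  (∃ x ∈ K, ∃ y ∈ K, I = closedArc x y) ∧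
    ∀ K' ∈ minimalSets F, K' ≠ K → I ∩ K' = ∅

/-- The family `E_K`: the maximal closed arcs with endpoints in `K` whose union is
disjoint from every other minimal set. -/
def EK (F : Set HomS1) (K : Set S1) : Set (Set S1) :=
  {I | IsGapArc F K I ∧ ∀ J, IsGapArc F K J → I ⊆ J → J = I}


attribute [local instance] ZeroLEOneClass.factZeroLtOne
set_option linter.unnecessarySimpa false
set_option linter.unusedVariables false

section AuxiliaryCircleDynamics
open Metric

/- ## layer 1 -/
lemma argS1_mem (z : S1) : argS1 z ∈ Ico (0:ℝ) 1 := by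
  have := (AddCircle.equivIco 1 0 z).2
  simpa [argS1] using this

lemma coe_argS1 (z : S1) : ((argS1 z : ℝ) : S1) = z := by
  have h : (AddCircle.equivIco 1 0).symm (AddCircle.equivIco 1 0 z) = z :=
    (AddCircle.equivIco 1 0).symm_apply_apply z
  rw [AddCircle.equivIco, QuotientAddGroup.equivIcoMod_symm_apply] at h
  exact h

lemma argS1_coe (r : ℝ) : argS1 ((r : ℝ) : S1) = Int.fract r := by
  have := AddCircle.coe_equivIco_mk_apply (p := (1:ℝ)) r
  simp only [argS1]
  rw [show ((r:ℝ) : S1) = (QuotientAddGroup.mk r : S1) from rfl]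
  simpa using this

lemma argS1_zero : argS1 0 = 0 := by
  have : ((0:ℝ) : S1) = (0 : S1) := by norm_num
  rw [← this, argS1_coe]; simp

lemma argS1_eq_zero_iff {z : S1} : argS1 z = 0 ↔ z = 0 := by
  constructor
  · intro h; have := coe_argS1 z; rw [h] at this; simpa using this.symm
  · rintro rfl; exact argS1_zero

lemma argS1_inj {z w : S1} (h : argS1 z = argS1 w) : z = w := by
  rw [← coe_argS1 z, ← coe_argS1 w, h]

lemma continuousAt_argS1 {z : S1} (hz : z ≠ 0) : ContinuousAt argS1 z := by
  have h0 : z ≠ (((0:ℝ)) : S1) := by simpa using hz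
  exact continuousAt_subtype_val.comp (AddCircle.continuousAt_equivIco 1 0 h0)

/- ## layer 2 -/
lemma coe_int_S1 (n : ℤ) : (((n:ℝ)) : S1) = 0 := by
  rw [AddCircle.coe_eq_zero_iff]; exact ⟨n, by simp⟩

lemma coe_fract (r : ℝ) : ((Int.fract r : ℝ) : S1) = ((r:ℝ) : S1) := by
  rw [Int.fract, sub_eq_add_neg, AddCircle.coe_add]
  have h1 : ((-(⌊r⌋:ℝ) : ℝ) : S1) = 0 := by
    have := coe_int_S1 (-⌊r⌋)
    push_cast at this
    exact this
  rw [h1, add_zero]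

lemma coe_S1_eq_zero_iff {r : ℝ} : ((r:ℝ) : S1) = 0 ↔ ∃ n : ℤ, (n:ℝ) = r := by
  rw [AddCircle.coe_eq_zero_iff]
  constructor
  · rintro ⟨n, hn⟩; exact ⟨n, by simpa using hn⟩
  · rintro ⟨n, hn⟩; exact ⟨n, by simpa using hn⟩

lemma continuous_coe_S1 : Continuous (fun r : ℝ => ((r:ℝ) : S1)) :=
  AddCircle.continuous_mk' 1

lemma norm_coe (r : ℝ) : ‖((r:ℝ) : S1)‖ = |r - round r| := by
  have := AddCircle.norm_eq (p := (1:ℝ)) (x := r)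
  simpa using this

lemma norm_coe_min (r : ℝ) : ‖((r:ℝ) : S1)‖ = min (Int.fract r) (1 - Int.fract r) := by
  rw [norm_coe, abs_sub_round_eq_min]

lemma dist_add_coe (c : S1) (t : ℝ) : dist (c + ((t:ℝ):S1)) c = ‖((t:ℝ):S1)‖ := by
  rw [dist_eq_norm]; congr 1; abel

lemma exists_lift_norm (z : S1) : ∃ s : ℝ, ((s:ℝ):S1) = z ∧ |s| = ‖z‖ := by
  set r := argS1 z with hr
  have hz : ((r:ℝ):S1) = z := coe_argS1 z
  have hmem : r ∈ Ico (0:ℝ) 1 := argS1_mem z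
  by_cases h : r ≤ 1/2
  · refine ⟨r, hz, ?_⟩
    rw [← hz, norm_coe_min, Int.fract_eq_self.2 ⟨hmem.1, hmem.2⟩]
    rw [abs_of_nonneg hmem.1]
    rw [min_eq_left (by linarith)]
  · refine ⟨r - 1, by rw [AddCircle.coe_sub]; simp [AddCircle.coe_period, hz], ?_⟩
    rw [← hz, norm_coe_min, Int.fract_eq_self.2 ⟨hmem.1, hmem.2⟩]
    have h2 : r - 1 ≤ 0 := by linarith [hmem.2]
    rw [abs_of_nonpos h2, min_eq_right (by linarith)]
    ring

/- ## layer 3 : charts -/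
/-- chart inverse based at `c` -/
def iot (c : S1) (t : ℝ) : S1 := c + ((t:ℝ):S1)
/-- chart based at `c` -/
def tau (c w : S1) : ℝ := argS1 (w - c)

lemma iota_tau (c w : S1) : iot c (tau c w) = w := by
  rw [iot, tau, coe_argS1]; abel

lemma tau_iota {t : ℝ} (c : S1) (ht : t ∈ Ico (0:ℝ) 1) : tau c (iot c t) = t := by
  rw [iot, tau]
  have : c + ((t:ℝ):S1) - c = ((t:ℝ):S1) := by abel
  rw [this, argS1_coe, Int.fract_eq_self.2 ⟨ht.1, ht.2⟩]

lemma tau_mem (c w : S1) : tau c w ∈ Ico (0:ℝ) 1 := argS1_mem _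

lemma tau_eq_zero_iff {c w : S1} : tau c w = 0 ↔ w = c := by
  rw [tau, argS1_eq_zero_iff, sub_eq_zero]

lemma tau_inj {c w w' : S1} (h : tau c w = tau c w') : w = w' := by
  have h2 : w - c = w' - c := argS1_inj h
  have := congrArg (fun z => z + c) h2
  simpa using this

lemma tau_pos {c w : S1} (h : w ≠ c) : 0 < tau c w := by
  rcases lt_or_eq_of_le (tau_mem c w).1 with h' | h'
  · exact h'
  · exact absurd (tau_eq_zero_iff.1 h'.symm) h

lemma continuousAt_tau {c w : S1} (h : w ≠ c) : ContinuousAt (tau c) w := by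
  have h1 : ContinuousAt argS1 (w - c) := continuousAt_argS1 (sub_ne_zero.2 h)
  have h2 : ContinuousAt (fun z : S1 => z - c) w := (continuous_sub_right c).continuousAt
  exact ContinuousAt.comp h1 h2

lemma continuous_iota (c : S1) : Continuous (iot c) := by
  unfold iot
  exact continuous_const.add continuous_coe_S1

lemma coe_Ioo_ne_zero {t : ℝ} (ht : t ∈ Ioo (0:ℝ) 1) : ((t:ℝ):S1) ≠ 0 := by
  intro h
  rcases coe_S1_eq_zero_iff.1 h with ⟨n, hn⟩
  have h0 : (0:ℝ) < n := by rw [hn]; exact ht.1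
  have h1 : (n:ℝ) < 1 := by rw [hn]; exact ht.2
  have : (0:ℤ) < n := by exact_mod_cast h0
  have : (1:ℤ) ≤ n := this
  have : (1:ℝ) ≤ (n:ℝ) := by exact_mod_cast this
  linarith

lemma iota_ne {c : S1} {t : ℝ} (ht : t ∈ Ioo (0:ℝ) 1) : iot c t ≠ c := by
  intro h
  have : ((t:ℝ):S1) = 0 := by
    have := congrArg (fun z => z - c) h
    simpa [iot] using this
  exact coe_Ioo_ne_zero ht this

lemma dist_iota_le_left {c : S1} {t : ℝ} (ht : t ∈ Ico (0:ℝ) 1) : dist (iot c t) c ≤ t := by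
  rw [iot, dist_add_coe, norm_coe_min, Int.fract_eq_self.2 ⟨ht.1, ht.2⟩]
  exact min_le_left _ _

lemma dist_iota_le_right {c : S1} {t : ℝ} (ht : t ∈ Ico (0:ℝ) 1) : dist (iot c t) c ≤ 1 - t := by
  rw [iot, dist_add_coe, norm_coe_min, Int.fract_eq_self.2 ⟨ht.1, ht.2⟩]
  exact min_le_right _ _

/-- if coords tend to `1`, points tend to the basepoint -/
lemma tendsto_iota_one {c : S1} {u : ℕ → ℝ} (hu : ∀ n, u n ∈ Ico (0:ℝ) 1)
    (h : Tendsto u atTop (nhds 1)) : Tendsto (fun n => iot c (u n)) atTop (nhds c) := by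
  rw [tendsto_iff_dist_tendsto_zero]
  have h1 : Tendsto (fun n => 1 - u n) atTop (nhds 0) := by
    have := h.const_sub 1
    simpa using this
  refine squeeze_zero (fun n => dist_nonneg) (fun n => dist_iota_le_right (hu n)) h1

lemma tendsto_iota_zero {c : S1} {u : ℕ → ℝ} (hu : ∀ n, u n ∈ Ico (0:ℝ) 1)
    (h : Tendsto u atTop (nhds 0)) : Tendsto (fun n => iot c (u n)) atTop (nhds c) := by
  rw [tendsto_iff_dist_tendsto_zero]
  refine squeeze_zero (fun n => dist_nonneg) (fun n => dist_iota_le_left (hu n)) h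


/-- Core dynamics of a strictly monotone self-map of `(0,1)`: increasing orbits converge,
and every point strictly between `t₀` and the limit is swept to the same limit. -/
lemma real_dyn {F : ℝ → ℝ} (hmono : StrictMonoOn F (Ioo 0 1))
    (hmaps : ∀ t ∈ Ioo (0:ℝ) 1, F t ∈ Ioo (0:ℝ) 1)
    (hcont : ∀ t ∈ Ioo (0:ℝ) 1, ContinuousAt F t)
    {t₀ : ℝ} (ht₀ : t₀ ∈ Ioo (0:ℝ) 1) (hlt : t₀ < F t₀) :
    ∃ L ∈ Ioc t₀ 1, Tendsto (fun n => F^[n] t₀) atTop (nhds L) ∧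
      ∀ s ∈ Ioo t₀ L, Tendsto (fun n => F^[n] s) atTop (nhds L) := by
  set T : ℕ → ℝ := fun n => F^[n] t₀ with hT
  have hTmem : ∀ n, T n ∈ Ioo (0:ℝ) 1 := by
    intro n; induction n with
    | zero => simpa [hT] using ht₀
    | succ n ih =>
        have : T (n+1) = F (T n) := Function.iterate_succ_apply' F n t₀
        rw [this]; exact hmaps _ ih
  have hTsucc : ∀ n, T n < T (n + 1) := by
    intro n; induction n with
    | zero => simpa [hT] using hlt
    | succ n ih =>
        have h1 : T (n+1) = F (T n) := Function.iterate_succ_apply' F n t₀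
        have h2 : T (n+2) = F (T (n+1)) := Function.iterate_succ_apply' F (n+1) t₀
        rw [h1] at ih ⊢
        rw [h2, h1]
        exact hmono (hTmem n) (hmaps _ (hTmem n)) ih
  have hTmono : StrictMono T := strictMono_nat_of_lt_succ hTsucc
  have hbdd : BddAbove (Set.range T) := ⟨1, by rintro y ⟨n, rfl⟩; exact (hTmem n).2.le⟩
  set L : ℝ := ⨆ n, T n with hL
  have hTtendsto : Tendsto T atTop (nhds L) := tendsto_atTop_ciSup hTmono.monotone hbdd
  have hTle : ∀ n, T n ≤ L := fun n => le_ciSup hbdd n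
  have hL1 : L ≤ 1 := ciSup_le fun n => (hTmem n).2.le
  have ht₀L : t₀ < L := lt_of_lt_of_le (by simpa [hT] using hlt) (hTle 1)
  have hLfix : L < 1 → F L = L := by
    intro hL1'
    have hLmem : L ∈ Ioo (0:ℝ) 1 := ⟨lt_trans (hTmem 0).1 ht₀L, hL1'⟩
    have h1 : Tendsto (fun n => F (T n)) atTop (nhds (F L)) :=
      ((hcont L hLmem).tendsto).comp hTtendsto
    have h2 : (fun n => F (T n)) = fun n => T (n + 1) := by
      funext n; exact (Function.iterate_succ_apply' F n t₀).symm
    rw [h2] at h1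
    have h3 : Tendsto (fun n => T (n + 1)) atTop (nhds L) :=
      hTtendsto.comp (tendsto_add_atTop_nat 1)
    exact tendsto_nhds_unique h1 h3
  refine ⟨L, ⟨ht₀L, hL1⟩, hTtendsto, ?_⟩
  intro s hs
  have hsmem : s ∈ Ioo (0:ℝ) 1 := ⟨lt_trans ht₀.1 hs.1, lt_of_lt_of_le hs.2 hL1⟩
  set S : ℕ → ℝ := fun n => F^[n] s with hS
  have key : ∀ n, S n ∈ Ioo (T n) L ∧ S n ∈ Ioo (0:ℝ) 1 := by
    intro n; induction n with
    | zero => exact ⟨by simpa [hS, hT] using hs, by simpa [hS] using hsmem⟩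
    | succ n ih =>
        obtain ⟨h1, h2⟩ := ih
        have hS1 : S (n+1) = F (S n) := Function.iterate_succ_apply' F n s
        have hT1 : T (n+1) = F (T n) := Function.iterate_succ_apply' F n t₀
        have hmem : F (S n) ∈ Ioo (0:ℝ) 1 := hmaps _ h2
        have hlow : T (n+1) < S (n+1) := by
          rw [hS1, hT1]; exact hmono (hTmem n) h2 h1.1
        have hup : S (n+1) < L := by
          rcases lt_or_ge L 1 with hc | hc
          · have hLmem : L ∈ Ioo (0:ℝ) 1 := ⟨lt_trans (hTmem 0).1 ht₀L, hc⟩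
            have := hmono h2 hLmem h1.2
            rw [hS1]; rw [hLfix hc] at this; exact this
          · have : L = 1 := le_antisymm hL1 hc
            rw [hS1, this]; exact hmem.2
        exact ⟨⟨hlow, hup⟩, by rw [hS1]; exact hmem⟩
  have h1 : Tendsto (fun n => T n) atTop (nhds L) := hTtendsto
  exact tendsto_of_tendsto_of_tendsto_of_le_of_le h1 tendsto_const_nhds
    (fun n => (key n).1.1.le) (fun n => (key n).1.2.le)


lemma iterate_mem_of_inv {ν : S1 → S1} {B : Set S1} (hB : ∀ u ∈ B, ν u ∈ B)
    {w : S1} (hw : w ∈ B) (n : ℕ) : ν^[n] w ∈ B := by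
  induction n with
  | zero => simpa using hw
  | succ n ih => rw [Function.iterate_succ_apply']; exact hB _ ih


lemma iota_iota (e : S1) (b a : ℝ) : iot (iot e b) a = iot e (b + a) := by
  show (e + ((b:ℝ):S1)) + ((a:ℝ):S1) = e + ((b + a : ℝ):S1)
  rw [AddCircle.coe_add]; abel

lemma iota_zero (e : S1) : iot e 0 = e := by
  show e + ((0:ℝ):S1) = e
  norm_num

lemma coe_one_S1 : (((1:ℝ)):S1) = 0 := by
  have := AddCircle.coe_period (p := (1:ℝ))
  exact this

lemma iota_add_one (e : S1) (u : ℝ) : iot e (u + 1) = iot e u := by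
  show e + ((u + 1 : ℝ):S1) = e + ((u:ℝ):S1)
  rw [AddCircle.coe_add, coe_one_S1, add_zero]

lemma tau_iota_iota (e : S1) (b a : ℝ) :
    tau (iot e b) (iot e a) = Int.fract (a - b) := by
  have h : iot e a - iot e b = ((a - b : ℝ):S1) := by
    show (e + ((a:ℝ):S1)) - (e + ((b:ℝ):S1)) = ((a - b : ℝ):S1)
    rw [AddCircle.coe_sub]; abel
  rw [tau, h, argS1_coe]

lemma tau_iota_base (e : S1) (b : ℝ) : tau (iot e b) e = Int.fract (-b) := by
  have h := tau_iota_iota e b 0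
  rw [iota_zero] at h
  rw [h]; norm_num

/-- Charted dynamics of a circle homeomorphism fixing `e`, whose chart map is increasing:
the orbit of `x ≠ e` converges to a point `ℓ`, and every closed invariant set meeting the
swept arc (described in the chart based at `x`) contains `ℓ`. -/
lemma homeo_dyn (ν : HomS1) (e x : S1) (he : ν e = e) (hx : x ≠ e) (hνx : ν x ≠ x)
    (hmono : StrictMonoOn (fun t => tau e (ν (iot e t))) (Ioo 0 1)) :
    ∃ ℓ : S1, ℓ ≠ x ∧ Tendsto (fun n => (⇑ν)^[n+1] x) atTop (nhds ℓ) ∧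
      ((∀ B : Set S1, IsClosed B → (∀ u ∈ B, ν u ∈ B) →
          (∃ w ∈ B, 0 < tau x w ∧ tau x w < tau x ℓ) → ℓ ∈ B) ∨
       (∀ B : Set S1, IsClosed B → (∀ u ∈ B, ν u ∈ B) →
          (∃ w ∈ B, tau x ℓ < tau x w ∧ tau x w < 1) → ℓ ∈ B)) := by
  classical
  obtain ⟨F, hF⟩ : ∃ F, (fun t => tau e (ν (iot e t))) = F := ⟨_, rfl⟩
  rw [hF] at hmono
  have hFapp : ∀ t, F t = tau e (ν (iot e t)) := fun t => by rw [← hF]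
  have hνne : ∀ {t : ℝ}, t ∈ Ioo (0:ℝ) 1 → ν (iot e t) ≠ e := by
    intro t ht hcontra
    have h1 : ν (iot e t) = ν e := by rw [hcontra, he]
    exact iota_ne ht (ν.injective h1)
  have hFmaps : ∀ t ∈ Ioo (0:ℝ) 1, F t ∈ Ioo (0:ℝ) 1 := by
    intro t ht
    rw [hFapp]
    exact ⟨tau_pos (hνne ht), (tau_mem e _).2⟩
  have hFcont : ∀ t ∈ Ioo (0:ℝ) 1, ContinuousAt F t := by
    intro t ht
    rw [← hF]
    have h1 : ContinuousAt (tau e) (ν (iot e t)) := continuousAt_tau (hνne ht)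
    have h2 : ContinuousAt (⇑ν) (iot e t) := ν.continuous.continuousAt
    have h3 : ContinuousAt (iot e) t := (continuous_iota e).continuousAt
    exact (h1.comp h2).comp h3
  obtain ⟨t₀, ht₀def⟩ : ∃ t, tau e x = t := ⟨_, rfl⟩
  have hxio : iot e t₀ = x := by rw [← ht₀def]; exact iota_tau e x
  have ht₀ : t₀ ∈ Ioo (0:ℝ) 1 := by
    rw [← ht₀def]; exact ⟨tau_pos hx, (tau_mem e x).2⟩
  have hiotF : ∀ u : S1, iot e (tau e (ν u)) = ν u := fun u => iota_tau e (ν u)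
  have hiter : ∀ (t : ℝ), ∀ n, (⇑ν)^[n] (iot e t) = iot e (F^[n] t) := by
    intro t n
    induction n with
    | zero => simp
    | succ n ih =>
        rw [Function.iterate_succ_apply', ih, Function.iterate_succ_apply', hFapp]
        exact (hiotF _).symm
  have hiterIoo : ∀ (t : ℝ), t ∈ Ioo (0:ℝ) 1 → ∀ n, F^[n] t ∈ Ioo (0:ℝ) 1 := by
    intro t ht n
    induction n with
    | zero => simpa using ht
    | succ n ih => rw [Function.iterate_succ_apply']; exact hFmaps _ ih
  have hFne : F t₀ ≠ t₀ := by
    rw [hFapp, hxio, ← ht₀def]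
    intro hcontra; exact hνx (tau_inj hcontra)
  -- converting real-orbit convergence into circle-orbit convergence
  have convert_tendsto : ∀ (s : ℝ), s ∈ Ioo (0:ℝ) 1 → ∀ (L : ℝ) (ℓ : S1), L ∈ Icc (0:ℝ) 1 →
      ((0 < L ∧ L < 1 ∧ ℓ = iot e L) ∨ ((L = 0 ∨ L = 1) ∧ ℓ = e)) →
      Tendsto (fun n => F^[n] s) atTop (nhds L) →
      Tendsto (fun n => (⇑ν)^[n] (iot e s)) atTop (nhds ℓ) := by
    intro s hs L ℓ hL hspec hten
    have heq : (fun n => (⇑ν)^[n] (iot e s)) = fun n => iot e (F^[n] s) := by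
      funext n; exact hiter s n
    rw [heq]
    rcases hspec with ⟨h0, h1, rfl⟩ | ⟨h01, rfl⟩
    · exact ((continuous_iota e).continuousAt.tendsto).comp hten
    · rcases h01 with rfl | rfl
      · exact tendsto_iota_zero (fun n => ⟨(hiterIoo s hs n).1.le, (hiterIoo s hs n).2⟩) hten
      · exact tendsto_iota_one (fun n => ⟨(hiterIoo s hs n).1.le, (hiterIoo s hs n).2⟩) hten
  rcases lt_or_gt_of_ne hFne with hcase | hcase
  · -- decreasing case : F t₀ < t₀ ; reflect coordinates
    obtain ⟨G, hG⟩ : ∃ G, (fun t : ℝ => 1 - F (1 - t)) = G := ⟨_, rfl⟩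
    have hGapp : ∀ t, G t = 1 - F (1 - t) := fun t => by rw [← hG]
    have href : ∀ t ∈ Ioo (0:ℝ) 1, (1 - t) ∈ Ioo (0:ℝ) 1 := by
      intro t ht; exact ⟨by linarith [ht.2], by linarith [ht.1]⟩
    have hGmono : StrictMonoOn G (Ioo 0 1) := by
      intro a ha b hb hab
      have h2 : F (1 - b) < F (1 - a) := hmono (href b hb) (href a ha) (by linarith)
      rw [hGapp, hGapp]; linarith
    have hGmaps : ∀ t ∈ Ioo (0:ℝ) 1, G t ∈ Ioo (0:ℝ) 1 := by
      intro t ht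
      have h2 := hFmaps _ (href t ht)
      rw [hGapp]
      exact ⟨by linarith [h2.2], by linarith [h2.1]⟩
    have hGcont : ∀ t ∈ Ioo (0:ℝ) 1, ContinuousAt G t := by
      intro t ht
      rw [← hG]
      have h1 : ContinuousAt F (1 - t) := hFcont _ (href t ht)
      have h2 : ContinuousAt (fun u : ℝ => 1 - u) t :=
        (continuous_const.sub continuous_id).continuousAt
      exact continuousAt_const.sub (h1.comp h2)
    have hGiter : ∀ (t : ℝ) (n : ℕ), G^[n] (1 - t) = 1 - F^[n] t := by
      intro t n
      induction n with
      | zero => simp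
      | succ n ih =>
          rw [Function.iterate_succ_apply', ih, Function.iterate_succ_apply', hGapp]
          ring_nf
    have ht₀' : (1 - t₀) ∈ Ioo (0:ℝ) 1 := href t₀ ht₀
    have hlt' : (1 - t₀) < G (1 - t₀) := by
      rw [hGapp]; ring_nf; linarith
    obtain ⟨L', hL'mem, hT'ten, hsweep'⟩ := real_dyn hGmono hGmaps hGcont ht₀' hlt'
    obtain ⟨L, hLdef⟩ : ∃ L, 1 - L' = L := ⟨_, rfl⟩
    have hL0 : 0 ≤ L := by rw [← hLdef]; linarith [hL'mem.2]
    have hLt₀ : L < t₀ := by rw [← hLdef]; linarith [hL'mem.1]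
    have hL1 : L < 1 := by linarith [ht₀.2]
    have hFten : Tendsto (fun n => F^[n] t₀) atTop (nhds L) := by
      have heq : (fun n => F^[n] t₀) = fun n => 1 - G^[n] (1 - t₀) := by
        funext n; rw [hGiter]; ring
      rw [heq, ← hLdef]
      exact tendsto_const_nhds.sub hT'ten
    -- common trap machinery for the decreasing case (right-side region)
    have main : ∀ (ℓ : S1), ((0 < L ∧ L < 1 ∧ ℓ = iot e L) ∨ ((L = 0 ∨ L = 1) ∧ ℓ = e)) →
        tau x ℓ = L - t₀ + 1 →
        ∃ ℓ' : S1, ℓ' ≠ x ∧ Tendsto (fun n => (⇑ν)^[n+1] x) atTop (nhds ℓ') ∧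
        ((∀ B : Set S1, IsClosed B → (∀ u ∈ B, ν u ∈ B) →
            (∃ w ∈ B, 0 < tau x w ∧ tau x w < tau x ℓ') → ℓ' ∈ B) ∨
         (∀ B : Set S1, IsClosed B → (∀ u ∈ B, ν u ∈ B) →
            (∃ w ∈ B, tau x ℓ' < tau x w ∧ tau x w < 1) → ℓ' ∈ B)) := by
      intro ℓ hspec hτℓ
      have hτpos : 0 < tau x ℓ := by rw [hτℓ]; linarith [ht₀.2]
      have hℓx : ℓ ≠ x := by
        intro hcontra
        rw [hcontra, show tau x x = 0 from tau_eq_zero_iff.2 rfl] at hτpos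
        exact lt_irrefl _ hτpos
      have hconv : Tendsto (fun n => (⇑ν)^[n+1] x) atTop (nhds ℓ) := by
        have h1 := convert_tendsto t₀ ht₀ L ℓ ⟨hL0, hL1.le⟩ hspec hFten
        rw [hxio] at h1
        exact h1.comp (tendsto_add_atTop_nat 1)
      refine ⟨ℓ, hℓx, hconv, Or.inr ?_⟩
      rintro B hBclosed hBinv ⟨w, hwB, hw1, hw2⟩
      obtain ⟨r, hrdef⟩ : ∃ r, tau x w = r := ⟨_, rfl⟩
      rw [hrdef] at hw1 hw2
      rw [hτℓ] at hw1
      have hwio : iot x r = w := by rw [← hrdef]; exact iota_tau x w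
      obtain ⟨s, hsdef⟩ : ∃ s, t₀ + r - 1 = s := ⟨_, rfl⟩
      have hsL : L < s := by rw [← hsdef]; linarith
      have hst₀ : s < t₀ := by rw [← hsdef]; linarith
      have hsIoo : s ∈ Ioo (0:ℝ) 1 := ⟨lt_of_le_of_lt hL0 hsL, by linarith [ht₀.2]⟩
      have hws : iot e s = w := by
        calc iot e s = iot e (s + 1) := (iota_add_one e s).symm
          _ = iot e (t₀ + r) := by rw [← hsdef]; ring_nf
          _ = iot (iot e t₀) r := (iota_iota e t₀ r).symm
          _ = w := by rw [hxio]; exact hwio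
      have hsweepF : Tendsto (fun n => F^[n] s) atTop (nhds L) := by
        have hmem' : (1 - s) ∈ Ioo (1 - t₀) L' := by
          constructor
          · linarith
          · have : L' = 1 - L := by rw [← hLdef]; ring
            rw [this]; linarith
        have h1 := hsweep' (1 - s) hmem'
        have heq : (fun n => F^[n] s) = fun n => 1 - G^[n] (1 - s) := by
          funext n; rw [hGiter]; ring
        rw [heq, ← hLdef]
        exact tendsto_const_nhds.sub h1
      have hconv2 : Tendsto (fun n => (⇑ν)^[n] w) atTop (nhds ℓ) := by
        have h1 := convert_tendsto s hsIoo L ℓ ⟨hL0, hL1.le⟩ hspec hsweepF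
        rw [hws] at h1
        exact h1
      exact hBclosed.mem_of_tendsto hconv2
        (Filter.Eventually.of_forall (fun n => iterate_mem_of_inv hBinv hwB n))
    rcases eq_or_lt_of_le hL0 with hL0' | hL0'
    · -- L = 0, limit point is e
      refine main e (Or.inr ⟨Or.inl hL0'.symm, rfl⟩) ?_
      rw [← hL0', ← hxio, tau_iota_base,
        Int.fract_neg (by rw [Int.fract_eq_self.2 ⟨ht₀.1.le, ht₀.2⟩]; exact ht₀.1.ne'),
        Int.fract_eq_self.2 ⟨ht₀.1.le, ht₀.2⟩]
      ring
    · -- 0 < L, limit point is iot e L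
      refine main (iot e L) (Or.inl ⟨hL0', hL1, rfl⟩) ?_
      rw [← hxio, tau_iota_iota, ← Int.fract_add_one (L - t₀),
        Int.fract_eq_self.2 ⟨by linarith [ht₀.2], by linarith⟩]
  · -- increasing case : t₀ < F t₀
    obtain ⟨L, hLmem, hTten, hsweep⟩ := real_dyn hmono hFmaps hFcont ht₀ hcase
    have hL0 : 0 < L := lt_trans ht₀.1 hLmem.1
    have hL1 : L ≤ 1 := hLmem.2
    have main : ∀ (ℓ : S1), ((0 < L ∧ L < 1 ∧ ℓ = iot e L) ∨ ((L = 0 ∨ L = 1) ∧ ℓ = e)) →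
        tau x ℓ = L - t₀ →
        ∃ ℓ' : S1, ℓ' ≠ x ∧ Tendsto (fun n => (⇑ν)^[n+1] x) atTop (nhds ℓ') ∧
        ((∀ B : Set S1, IsClosed B → (∀ u ∈ B, ν u ∈ B) →
            (∃ w ∈ B, 0 < tau x w ∧ tau x w < tau x ℓ') → ℓ' ∈ B) ∨
         (∀ B : Set S1, IsClosed B → (∀ u ∈ B, ν u ∈ B) →
            (∃ w ∈ B, tau x ℓ' < tau x w ∧ tau x w < 1) → ℓ' ∈ B)) := by
      intro ℓ hspec hτℓ
      have hτpos : 0 < tau x ℓ := by rw [hτℓ]; linarith [hLmem.1]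
      have hℓx : ℓ ≠ x := by
        intro hcontra
        rw [hcontra, show tau x x = 0 from tau_eq_zero_iff.2 rfl] at hτpos
        exact lt_irrefl _ hτpos
      have hconv : Tendsto (fun n => (⇑ν)^[n+1] x) atTop (nhds ℓ) := by
        have h1 := convert_tendsto t₀ ht₀ L ℓ ⟨hL0.le, hL1⟩ hspec hTten
        rw [hxio] at h1
        exact h1.comp (tendsto_add_atTop_nat 1)
      refine ⟨ℓ, hℓx, hconv, Or.inl ?_⟩
      rintro B hBclosed hBinv ⟨w, hwB, hw1, hw2⟩
      obtain ⟨r, hrdef⟩ : ∃ r, tau x w = r := ⟨_, rfl⟩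
      rw [hrdef] at hw1 hw2
      rw [hτℓ] at hw2
      have hwio : iot x r = w := by rw [← hrdef]; exact iota_tau x w
      obtain ⟨s, hsdef⟩ : ∃ s, t₀ + r = s := ⟨_, rfl⟩
      have hsmem : s ∈ Ioo t₀ L := ⟨by rw [← hsdef]; linarith, by rw [← hsdef]; linarith⟩
      have hsIoo : s ∈ Ioo (0:ℝ) 1 :=
        ⟨lt_trans ht₀.1 hsmem.1, lt_of_lt_of_le hsmem.2 hL1⟩
      have hws : iot e s = w := by
        calc iot e s = iot e (t₀ + r) := by rw [hsdef]
          _ = iot (iot e t₀) r := (iota_iota e t₀ r).symm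
          _ = w := by rw [hxio]; exact hwio
      have hconv2 : Tendsto (fun n => (⇑ν)^[n] w) atTop (nhds ℓ) := by
        have h1 := convert_tendsto s hsIoo L ℓ ⟨hL0.le, hL1⟩ hspec (hsweep s hsmem)
        rw [hws] at h1
        exact h1
      exact hBclosed.mem_of_tendsto hconv2
        (Filter.Eventually.of_forall (fun n => iterate_mem_of_inv hBinv hwB n))
    rcases lt_or_eq_of_le hL1 with hL1' | hL1'
    · refine main (iot e L) (Or.inl ⟨hL0, hL1', rfl⟩) ?_
      rw [← hxio, tau_iota_iota,
        Int.fract_eq_self.2 ⟨by linarith [hLmem.1], by linarith [ht₀.1]⟩]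
    · refine main e (Or.inr ⟨Or.inr hL1', rfl⟩) ?_
      rw [hL1', ← hxio, tau_iota_base,
        Int.fract_neg (by rw [Int.fract_eq_self.2 ⟨ht₀.1.le, ht₀.2⟩]; exact ht₀.1.ne'),
        Int.fract_eq_self.2 ⟨ht₀.1.le, ht₀.2⟩]


lemma norm_coe_small {s : ℝ} (h : |s| < 1/2) : ‖((s:ℝ):S1)‖ = |s| := by
  rw [norm_coe]
  have h2 : round s = 0 := round_eq_zero_iff.2 ⟨by cases abs_lt.1 h; linarith, (abs_lt.1 h).2⟩
  rw [h2]; norm_num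

/-- iterates of a homeomorphism as homeomorphisms -/
def hpow (g : HomS1) : ℕ → HomS1
  | 0 => Homeomorph.refl S1
  | (n+1) => (hpow g n).trans g

lemma hpow_apply (g : HomS1) (n : ℕ) (x : S1) : hpow g n x = (⇑g)^[n] x := by
  induction n with
  | zero => rfl
  | succ n ih =>
      show g (hpow g n x) = _
      rw [ih, Function.iterate_succ_apply']

/-- A circle homeomorphism with two disjoint nonempty closed invariant sets, one of them
with at least two points, has a periodic point. -/
lemma exists_periodic (g : HomS1) (A B : Set S1) (hBne : B.Nonempty)
    (hAcl : IsClosed A) (hBcl : IsClosed B) (hdisj : ∀ a ∈ A, a ∉ B)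
    (hAinv : ∀ a ∈ A, g a ∈ A) (hBinv : ∀ b ∈ B, g b ∈ B)
    (hA2 : ∃ a₁ ∈ A, ∃ a₂ ∈ A, a₁ ≠ a₂) :
    ∃ N : ℕ, 1 ≤ N ∧ ∃ q : S1, (⇑g)^[N] q = q := by
  classical
  obtain ⟨a₁, ha₁, a₂, ha₂, ha12⟩ := hA2
  have hAne : A.Nonempty := ⟨a₁, ha₁⟩
  -- uniform separation
  have hpos : ∀ b ∈ B, 0 < infDist b A := by
    intro b hb
    exact (hAcl.notMem_iff_infDist_pos hAne).1 (fun hbA => hdisj b hbA hb)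
  have hBcomp : IsCompact B := hBcl.isCompact
  obtain ⟨b₀, hb₀, hmin⟩ := hBcomp.exists_isMinOn hBne (continuous_infDist_pt A).continuousOn
  obtain ⟨ρ, hρdef⟩ : ∃ ρ, min (infDist b₀ A) (1/3) = ρ := ⟨_, rfl⟩
  have hρpos : 0 < ρ := by rw [← hρdef]; exact lt_min (hpos b₀ hb₀) (by norm_num)
  have hρsmall : ρ ≤ 1/3 := by rw [← hρdef]; exact min_le_right _ _
  have hkey : ∀ b ∈ B, ∀ w ∈ A, ¬ dist b w < ρ := by
    intro b hb w hw hcontra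
    have h1 : infDist b A ≤ dist b w := infDist_le_dist_of_mem hw
    have h2 : ρ ≤ infDist b A := le_trans (by rw [← hρdef]; exact min_le_left _ _) (hmin hb)
    linarith
  -- two close points on an orbit in B
  obtain ⟨b, hb⟩ := hBne
  set u : ℕ → S1 := fun n => (⇑g)^[n] b with hu
  have humem : ∀ n, u n ∈ B := fun n => iterate_mem_of_inv hBinv hb n
  obtain ⟨z, hz, φ, hφ, hconv⟩ := hBcomp.tendsto_subseq humem
  obtain ⟨K0, hK0⟩ := (Metric.tendsto_atTop.1 hconv (ρ/2) (by linarith)).imp (fun K hK => hK)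
  have hnm : φ K0 < φ (K0+1) := hφ (by omega)
  have hdistnm : dist (u (φ K0)) (u (φ (K0+1))) < ρ := by
    have h1 := hK0 K0 (le_refl _)
    have h2 := hK0 (K0+1) (by omega)
    calc dist (u (φ K0)) (u (φ (K0+1)))
        ≤ dist ((u ∘ φ) K0) z + dist ((u ∘ φ) (K0+1)) z := dist_triangle_right _ _ _
      _ < ρ/2 + ρ/2 := by exact add_lt_add h1 h2
      _ = ρ := by ring
  obtain ⟨N, hNdef⟩ : ∃ N, φ (K0+1) - φ K0 = N := ⟨_, rfl⟩
  have hN1 : 1 ≤ N := by omega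
  set p : S1 := u (φ K0) with hp
  have hpB : p ∈ B := humem _
  set H : HomS1 := hpow g N with hH
  have hHp : H p = u (φ (K0+1)) := by
    rw [hH, hpow_apply, hp, hu]
    simp only
    rw [← Function.iterate_add_apply]
    congr 1
    omega
  have hHA : ∀ a ∈ A, H a ∈ A := by
    intro a ha; rw [hH, hpow_apply]; exact iterate_mem_of_inv hAinv ha N
  have hHsymmA : ∀ w, w ∉ A → H.symm w ∉ A := by
    intro w hw hcontra
    have := hHA _ hcontra
    rw [Homeomorph.apply_symm_apply] at this
    exact hw this
  -- the connected set U joining p to H p inside Aᶜ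
  set U : Set S1 := (fun s : ℝ => p + ((s:ℝ):S1)) '' Ioo (-ρ) ρ with hU
  have hUconn : IsPreconnected U := by
    apply IsPreconnected.image isPreconnected_Ioo
    exact (continuous_const.add (AddCircle.continuous_mk' 1)).continuousOn
  have hUsub : U ⊆ Aᶜ := by
    rintro w ⟨s, hs, rfl⟩
    intro hwA
    have habs : |s| < ρ := abs_lt.2 ⟨hs.1, hs.2⟩
    have h1 : dist p (p + ((s:ℝ):S1)) < ρ := by
      rw [dist_comm, dist_eq_norm]
      have : p + ((s:ℝ):S1) - p = ((s:ℝ):S1) := by abel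
      rw [this, norm_coe_small (by linarith)]
      exact habs
    exact hkey p hpB _ hwA h1
  have hpU : p ∈ U := ⟨0, by constructor <;> [linarith; linarith], by norm_num⟩
  have hHpU : H p ∈ U := by
    obtain ⟨s, hs1, hs2⟩ := exists_lift_norm (u (φ (K0+1)) - p)
    refine ⟨s, ?_, ?_⟩
    · have : ‖u (φ (K0+1)) - p‖ < ρ := by
        rw [← dist_eq_norm, dist_comm]; exact hdistnm
      rw [← hs2] at this
      exact abs_lt.1 this
    · show p + ((s:ℝ):S1) = H p
      rw [hs1, hHp]; abel
  set γ : Set S1 := connectedComponentIn Aᶜ p with hγ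
  have hpA : p ∉ A := fun h => hdisj p h hpB
  have hγsub : γ ⊆ Aᶜ := connectedComponentIn_subset _ _
  have hUγ : U ⊆ γ := hUconn.subset_connectedComponentIn hpU hUsub
  have hγconn : IsPreconnected γ := isPreconnected_connectedComponentIn
  have hpγ : p ∈ γ := mem_connectedComponentIn hpA
  have hSγ : H.symm '' γ ⊆ γ := by
    apply IsPreconnected.subset_connectedComponentIn
    · exact hγconn.image _ H.symm.continuous.continuousOn
    · refine ⟨H p, hUγ hHpU, ?_⟩
      rw [Homeomorph.symm_apply_apply]
    · rintro w ⟨v, hv, rfl⟩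
      exact hHsymmA v (hγsub hv)
  -- γ avoids a₁ and a₂ hence lies in one of two disjoint open "arcs"
  obtain ⟨r, hrdef⟩ : ∃ r, tau a₁ a₂ = r := ⟨_, rfl⟩
  have hr01 : r ∈ Ioo (0:ℝ) 1 := by
    rw [← hrdef]; exact ⟨tau_pos (Ne.symm ha12), (tau_mem a₁ a₂).2⟩
  set U₁ : Set S1 := (tau a₁) ⁻¹' (Ioo 0 r) with hU₁
  set U₂ : Set S1 := (tau a₁) ⁻¹' (Ioo r 1) with hU₂
  have hopen : ∀ (J : Set ℝ), J ⊆ Ioo (0:ℝ) 1 → IsOpen J → IsOpen ((tau a₁) ⁻¹' J) := by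
    intro J hJsub hJopen
    rw [isOpen_iff_mem_nhds]
    intro w hw
    have hwa : w ≠ a₁ := by
      intro hcontra
      have := hJsub hw
      rw [hcontra] at this
      rw [show tau a₁ a₁ = 0 from tau_eq_zero_iff.2 rfl] at this
      exact lt_irrefl _ this.1
    exact (continuousAt_tau hwa) (hJopen.mem_nhds hw)
  have hU₁open : IsOpen U₁ := hopen _ (fun t ht => ⟨ht.1, lt_trans ht.2 hr01.2⟩) isOpen_Ioo
  have hU₂open : IsOpen U₂ := hopen _ (fun t ht => ⟨lt_trans hr01.1 ht.1, ht.2⟩) isOpen_Ioo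
  have hU₁₂disj : Disjoint U₁ U₂ := by
    rw [Set.disjoint_iff]
    rintro w ⟨h1, h2⟩
    exact absurd (lt_trans h1.2 h2.1) (lt_irrefl _)
  have hγ12 : γ ⊆ U₁ ∪ U₂ := by
    intro w hw
    have hwa1 : w ≠ a₁ := by
      intro hcontra; rw [hcontra] at hw; exact hγsub hw ha₁
    have hwa2 : w ≠ a₂ := by
      intro hcontra; rw [hcontra] at hw; exact hγsub hw ha₂
    have h1 : tau a₁ w ∈ Ioo (0:ℝ) 1 := ⟨tau_pos hwa1, (tau_mem a₁ w).2⟩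
    have h2 : tau a₁ w ≠ r := by
      intro hcontra
      rw [← hrdef] at hcontra
      exact hwa2 (tau_inj hcontra)
    rcases lt_or_gt_of_ne h2 with h3 | h3
    · exact Or.inl ⟨h1.1, h3⟩
    · exact Or.inr ⟨h3, h1.2⟩
  have hsplit := hγconn.subset_or_subset hU₁open hU₂open hU₁₂disj hγ12
  -- a point c₀ not in the closure of γ
  have hc₀ : ∃ c₀ : S1, c₀ ∉ closure γ := by
    rcases hsplit with hcase | hcase
    · refine ⟨iot a₁ ((r+1)/2), ?_⟩
      intro hcontra
      have h1 : closure γ ⊆ U₂ᶜ := closure_minimal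
        (fun w hw => (Set.disjoint_left.1 hU₁₂disj) (hcase hw)) (hU₂open.isClosed_compl)
      apply h1 hcontra
      show tau a₁ (iot a₁ ((r+1)/2)) ∈ Ioo r 1
      rw [tau_iota a₁ ⟨by linarith [hr01.1], by linarith [hr01.2]⟩]
      exact ⟨by linarith [hr01.2], by linarith [hr01.2]⟩
    · refine ⟨iot a₁ (r/2), ?_⟩
      intro hcontra
      have h1 : closure γ ⊆ U₁ᶜ := closure_minimal
        (fun w hw => (Set.disjoint_right.1 hU₁₂disj) (hcase hw)) (hU₁open.isClosed_compl)
      apply h1 hcontra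
      show tau a₁ (iot a₁ (r/2)) ∈ Ioo 0 r
      rw [tau_iota a₁ ⟨by linarith [hr01.1], by linarith [hr01.1, hr01.2]⟩]
      exact ⟨by linarith [hr01.1], by linarith [hr01.1]⟩
  obtain ⟨c₀, hc₀⟩ := hc₀
  -- transfer to a compact interval and apply the IVT
  set D : Set S1 := closure γ with hD
  have hDcomp : IsCompact D := isClosed_closure.isCompact
  have hDconn : IsPreconnected D := hγconn.closure
  have hDne : D.Nonempty := ⟨p, subset_closure hpγ⟩
  have hSD : ∀ w ∈ D, H.symm w ∈ D := by
    intro w hw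
    have h1 : H.symm '' D ⊆ D := by
      calc H.symm '' closure γ ⊆ closure (H.symm '' γ) :=
            image_closure_subset_closure_image H.symm.continuous
        _ ⊆ closure γ := closure_mono hSγ
    exact h1 ⟨w, hw, rfl⟩
  have hDc₀ : ∀ w ∈ D, w ≠ c₀ := fun w hw hcontra => hc₀ (hcontra ▸ hw)
  have htauD : ContinuousOn (tau c₀) D :=
    fun w hw => (continuousAt_tau (hDc₀ w hw)).continuousWithinAt
  set J : Set ℝ := (tau c₀) '' D with hJ
  have hJcomp : IsCompact J := hDcomp.image_of_continuousOn htauD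
  have hJconn : IsPreconnected J := hDconn.image _ htauD
  have hJne : J.Nonempty := hDne.image _
  have hJeq : J = Icc (sInf J) (sSup J) := eq_Icc_of_connected_compact ⟨hJne, hJconn⟩ hJcomp
  have hiotJ : ∀ t ∈ J, iot c₀ t ∈ D := by
    rintro t ⟨w, hw, inf⟩
    rw [← inf, iota_tau]
    exact hw
  have hmapJ : ∀ t ∈ J, tau c₀ (H.symm (iot c₀ t)) ∈ J := by
    intro t ht
    exact ⟨H.symm (iot c₀ t), hSD _ (hiotJ t ht), rfl⟩
  -- fixed point of Ŝ on J
  set Sh : ℝ → ℝ := fun t => tau c₀ (H.symm (iot c₀ t)) with hSh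
  have hShcont : ContinuousOn Sh J := by
    intro t ht
    have h1 : ContinuousAt (tau c₀) (H.symm (iot c₀ t)) :=
      continuousAt_tau (hDc₀ _ (hSD _ (hiotJ t ht)))
    have h2 : ContinuousAt (⇑H.symm) (iot c₀ t) := H.symm.continuous.continuousAt
    have h3 : ContinuousAt (iot c₀) t := (continuous_iota c₀).continuousAt
    exact ((h1.comp h2).comp h3).continuousWithinAt
  have hsub : sInf J ≤ sSup J := by
    obtain ⟨t, ht⟩ := hJne
    exact le_trans (csInf_le hJcomp.bddBelow ht) (le_csSup hJcomp.bddAbove ht)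
  have hInfJ : sInf J ∈ J := hJcomp.sInf_mem hJne
  have hSupJ : sSup J ∈ J := hJcomp.sSup_mem hJne
  have hIVT : ∃ t ∈ J, Sh t = t := by
    have h5 : sInf J ≤ Sh (sInf J) := csInf_le hJcomp.bddBelow (hmapJ _ hInfJ)
    have h6 : Sh (sSup J) ≤ sSup J := le_csSup hJcomp.bddAbove (hmapJ _ hSupJ)
    have hfcont : ContinuousOn (fun t => Sh t - t) (Icc (sInf J) (sSup J)) := by
      rw [← hJeq]
      exact hShcont.sub continuousOn_id
    have h0 : (0:ℝ) ∈ Icc ((fun t => Sh t - t) (sSup J)) ((fun t => Sh t - t) (sInf J)) := by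
      constructor
      · show Sh (sSup J) - sSup J ≤ 0
        linarith
      · show 0 ≤ Sh (sInf J) - sInf J
        linarith
    obtain ⟨t, ht, hft⟩ := intermediate_value_Icc' hsub hfcont h0
    refine ⟨t, by rw [hJeq]; exact ht, ?_⟩
    have h7 : Sh t - t = 0 := hft
    linarith
  obtain ⟨t, htJ, htfix⟩ := hIVT
  refine ⟨N, hN1, iot c₀ t, ?_⟩
  have h1 : H.symm (iot c₀ t) = iot c₀ t := by
    have h2 : tau c₀ (H.symm (iot c₀ t)) = tau c₀ (iot c₀ t) := by
      obtain ⟨w, hw, rfl⟩ := htJ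
      rw [iota_tau]
      have h8 : Sh (tau c₀ w) = tau c₀ w := htfix
      rw [hSh] at h8
      simp only at h8
      rw [iota_tau] at h8
      exact h8
    exact tau_inj h2
  have h3 : H (iot c₀ t) = iot c₀ t := by
    conv_lhs => rw [← h1]
    rw [Homeomorph.apply_symm_apply]
  rw [← hpow_apply g N, ← hH]
  exact h3

/-- From a map `g` sending `x` into the closed invariant set `K` (with `x ∉ K`), and a second
disjoint closed invariant nonempty set `K'`, produce a limit point `ℓ ∈ K` together with a
one-sided trap for all `g`-invariant closed sets. -/
lemma hit_data (g : HomS1) (K K' : Set S1) (x : S1)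
    (hKcl : IsClosed K) (hK'cl : IsClosed K') (hK'ne : K'.Nonempty)
    (hdisj : ∀ a ∈ K, a ∉ K') (hxK : x ∉ K)
    (hKinv : ∀ a ∈ K, g a ∈ K) (hK'inv : ∀ b ∈ K', g b ∈ K')
    (hK2 : ∃ a₁ ∈ K, ∃ a₂ ∈ K, a₁ ≠ a₂)
    (hgx : g x ∈ K) :
    ∃ ℓ ∈ K, ℓ ≠ x ∧
      ((∀ B : Set S1, IsClosed B → (∀ u ∈ B, g u ∈ B) →
          (∃ w ∈ B, 0 < tau x w ∧ tau x w < tau x ℓ) → ℓ ∈ B) ∨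
       (∀ B : Set S1, IsClosed B → (∀ u ∈ B, g u ∈ B) →
          (∃ w ∈ B, tau x ℓ < tau x w ∧ tau x w < 1) → ℓ ∈ B)) := by
  classical
  obtain ⟨N, hN1, q, hq⟩ := exists_periodic g K K' hK'ne hKcl hK'cl hdisj hKinv hK'inv hK2
  set μ : HomS1 := hpow g N with hμ
  have hμapp : ∀ w, μ w = (⇑g)^[N] w := fun w => hpow_apply g N w
  have hμq : μ q = q := by rw [hμapp]; exact hq
  have hitK : ∀ n, 1 ≤ n → (⇑g)^[n] x ∈ K := by
    intro n hn
    obtain ⟨m, rfl⟩ : ∃ m, n = m + 1 := ⟨n - 1, by omega⟩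
    rw [Function.iterate_succ_apply]
    exact iterate_mem_of_inv hKinv hgx m
  have hμx : μ x ∈ K := by rw [hμapp]; exact hitK N hN1
  have hxq : x ≠ q := by
    intro hcontra
    rw [← hcontra] at hμq
    rw [hμq] at hμx
    exact hxK hμx
  -- chart map of μ at the fixed point q
  have hμne : ∀ {t : ℝ}, t ∈ Ioo (0:ℝ) 1 → μ (iot q t) ≠ q := by
    intro t ht hcontra
    have h1 : μ (iot q t) = μ q := by rw [hcontra, hμq]
    exact iota_ne ht (μ.injective h1)
  have hFmaps : ∀ t ∈ Ioo (0:ℝ) 1, tau q (μ (iot q t)) ∈ Ioo (0:ℝ) 1 :=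
    fun t ht => ⟨tau_pos (hμne ht), (tau_mem q _).2⟩
  have hFcont : ContinuousOn (fun t => tau q (μ (iot q t))) (Ioo 0 1) := by
    intro t ht
    have h1 : ContinuousAt (tau q) (μ (iot q t)) := continuousAt_tau (hμne ht)
    have h2 : ContinuousAt (⇑μ) (iot q t) := μ.continuous.continuousAt
    have h3 : ContinuousAt (iot q) t := (continuous_iota q).continuousAt
    exact (((h1.comp h2).comp h3)).continuousWithinAt
  have hFinj : InjOn (fun t => tau q (μ (iot q t))) (Ioo 0 1) := by
    intro s hs t ht h
    have h1 : μ (iot q s) = μ (iot q t) := tau_inj h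
    have h2 : iot q s = iot q t := μ.injective h1
    have h3 := congrArg (tau q) h2
    rw [tau_iota q ⟨hs.1.le, hs.2⟩, tau_iota q ⟨ht.1.le, ht.2⟩] at h3
    exact h3
  rcases ContinuousOn.strictMonoOn_of_injOn_Ioo (by norm_num) hFcont hFinj with hmono | hanti
  · -- μ's chart is increasing : use ν := μ
    have hμxne : μ x ≠ x := fun h => hxK (h ▸ hμx)
    obtain ⟨ℓ, hℓx, hten, htrap⟩ := homeo_dyn μ q x hμq hxq hμxne hmono
    have hℓK : ℓ ∈ K := by
      refine hKcl.mem_of_tendsto hten (Filter.Eventually.of_forall (fun n => ?_))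
      have hKμ : ∀ u ∈ K, μ u ∈ K := by
        intro u hu
        rw [hμapp]
        exact iterate_mem_of_inv hKinv hu N
      rw [Function.iterate_succ_apply]
      exact iterate_mem_of_inv hKμ hμx n
    refine ⟨ℓ, hℓK, hℓx, ?_⟩
    have hBconv : ∀ B : Set S1, (∀ u ∈ B, g u ∈ B) → (∀ u ∈ B, μ u ∈ B) := by
      intro B hB u hu
      rw [hμapp]; exact iterate_mem_of_inv hB hu N
    rcases htrap with h | h
    · exact Or.inl (fun B hB1 hB2 hB3 => h B hB1 (hBconv B hB2) hB3)
    · exact Or.inr (fun B hB1 hB2 hB3 => h B hB1 (hBconv B hB2) hB3)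
  · -- μ's chart is decreasing : use ν := μ ∘ μ
    set ν : HomS1 := μ.trans μ with hν
    have hνapp : ∀ w, ν w = μ (μ w) := fun w => rfl
    have hνq : ν q = q := by rw [hνapp, hμq, hμq]
    have hKμ : ∀ u ∈ K, μ u ∈ K := by
      intro u hu
      rw [hμapp]
      exact iterate_mem_of_inv hKinv hu N
    have hνx : ν x ∈ K := by
      rw [hνapp]
      exact hKμ _ hμx
    have hνxne : ν x ≠ x := fun h => hxK (h ▸ hνx)
    have hmono2 : StrictMonoOn (fun t => tau q (ν (iot q t))) (Ioo 0 1) := by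
      intro s hs t ht hst
      have hFs := hFmaps s hs
      have hFt := hFmaps t ht
      have hcomp : ∀ u ∈ Ioo (0:ℝ) 1, tau q (ν (iot q u)) =
          tau q (μ (iot q (tau q (μ (iot q u))))) := by
        intro u hu
        rw [iota_tau, hνapp]
      show tau q (ν (iot q s)) < tau q (ν (iot q t))
      rw [hcomp s hs, hcomp t ht]
      have h1 : tau q (μ (iot q t)) < tau q (μ (iot q s)) := hanti hs ht hst
      exact hanti hFt hFs h1
    obtain ⟨ℓ, hℓx, hten, htrap⟩ := homeo_dyn ν q x hνq hxq hνxne hmono2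
    have hνinvK : ∀ u ∈ K, ν u ∈ K := by
      intro u hu
      rw [hνapp]
      exact hKμ _ (hKμ _ hu)
    have hℓK : ℓ ∈ K := by
      refine hKcl.mem_of_tendsto hten (Filter.Eventually.of_forall (fun n => ?_))
      rw [Function.iterate_succ_apply]
      exact iterate_mem_of_inv hνinvK hνx n
    refine ⟨ℓ, hℓK, hℓx, ?_⟩
    have hBconv : ∀ B : Set S1, (∀ u ∈ B, g u ∈ B) → (∀ u ∈ B, ν u ∈ B) := by
      intro B hB u hu
      have h1 : μ u ∈ B := by rw [hμapp]; exact iterate_mem_of_inv hB hu N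
      have h2 : μ (μ u) ∈ B := by rw [hμapp]; exact iterate_mem_of_inv hB h1 N
      rw [hνapp]
      exact h2
    rcases htrap with h | h
    · exact Or.inl (fun B hB1 hB2 hB3 => h B hB1 (hBconv B hB2) hB3)
    · exact Or.inr (fun B hB1 hB2 hB3 => h B hB1 (hBconv B hB2) hB3)

/-- invariance under every member of the generated semigroup -/
lemma semigroup_inv {F : Set HomS1} {K : Set S1} (hK : InvariantUnder F K) :
    ∀ g ∈ semigroupOf F, ∀ w ∈ K, g w ∈ K := by
  intro g hg
  induction hg with
  | base f hf => intro w hw; exact hK f hf ⟨w, hw, rfl⟩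
  | comp f g _ _ ihf ihg =>
      intro w hw
      exact ihf _ (ihg w hw)

/-- distinct minimal sets are disjoint -/
lemma minimal_disjoint {F : Set HomS1} {K K' : Set S1}
    (hK : K ∈ minimalSets F) (hK' : K' ∈ minimalSets F) (hne : K ≠ K') :
    ∀ a ∈ K, a ∉ K' := by
  intro a haK haK'
  apply hne
  have hint : (K ∩ K').Nonempty := ⟨a, haK, haK'⟩
  have hcl : IsClosed (K ∩ K') := hK.2.1.inter hK'.2.1
  have hinv : InvariantUnder F (K ∩ K') := by
    rintro f hf y ⟨w, ⟨hw1, hw2⟩, rfl⟩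
    exact ⟨hK.2.2.1 f hf ⟨w, hw1, rfl⟩, hK'.2.2.1 f hf ⟨w, hw2, rfl⟩⟩
  have h1 : K ∩ K' = K := hK.2.2.2 _ inter_subset_left hint hcl hinv
  have h2 : K ∩ K' = K' := hK'.2.2.2 _ inter_subset_right hint hcl hinv
  rw [← h1, h2]

/-- a minimal set entered from outside has two distinct points -/
lemma hit_two_points {F : Set HomS1} {K : Set S1} (hK : K ∈ minimalSets F) {x : S1}
    (hx : x ∉ K) {g : HomS1} (hg : g ∈ semigroupOf F) (hgx : g x ∈ K) :
    ∃ a₁ ∈ K, ∃ a₂ ∈ K, a₁ ≠ a₂ := by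
  by_contra hcon
  push_neg at hcon
  obtain ⟨a, ha⟩ := hK.1
  have h1 : g a ∈ K := semigroup_inv hK.2.2.1 g hg a ha
  have h2 : g x = g a := hcon _ hgx _ h1
  have h3 : x = a := g.injective h2
  exact hx (h3 ▸ ha)

/-- clash of two same-side (left) traps -/
lemma clashL (x ℓ ℓ' : S1) (K K' : Set S1)
    (hdisj : ∀ a ∈ K, a ∉ K')
    (hℓ : ℓ ∈ K) (hℓ' : ℓ' ∈ K') (hℓx : ℓ ≠ x) (hℓ'x : ℓ' ≠ x)
    (trap1 : (∃ w ∈ K', 0 < tau x w ∧ tau x w < tau x ℓ) → ℓ ∈ K')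
    (trap2 : (∃ w ∈ K, 0 < tau x w ∧ tau x w < tau x ℓ') → ℓ' ∈ K) : False := by
  rcases lt_trichotomy (tau x ℓ') (tau x ℓ) with h | h | h
  · exact hdisj ℓ hℓ (trap1 ⟨ℓ', hℓ', tau_pos hℓ'x, h⟩)
  · exact hdisj ℓ hℓ ((tau_inj h) ▸ hℓ')
  · exact hdisj ℓ' (trap2 ⟨ℓ, hℓ, tau_pos hℓx, h⟩) hℓ'

/-- clash of two same-side (right) traps -/
lemma clashR (x ℓ ℓ' : S1) (K K' : Set S1)
    (hdisj : ∀ a ∈ K, a ∉ K')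
    (hℓ : ℓ ∈ K) (hℓ' : ℓ' ∈ K') (hℓx : ℓ ≠ x) (hℓ'x : ℓ' ≠ x)
    (trap1 : (∃ w ∈ K', tau x ℓ < tau x w ∧ tau x w < 1) → ℓ ∈ K')
    (trap2 : (∃ w ∈ K, tau x ℓ' < tau x w ∧ tau x w < 1) → ℓ' ∈ K) : False := by
  rcases lt_trichotomy (tau x ℓ') (tau x ℓ) with h | h | h
  · exact hdisj ℓ' (trap2 ⟨ℓ, hℓ, h, (tau_mem x ℓ).2⟩) hℓ'
  · exact hdisj ℓ hℓ ((tau_inj h) ▸ hℓ')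
  · exact hdisj ℓ hℓ (trap1 ⟨ℓ', hℓ', h, (tau_mem x ℓ').2⟩)

/-- the orbit of a point cannot meet three distinct minimal sets -/
lemma three_hit {F : Set HomS1} {K₁ K₂ K₃ : Set S1}
    (h1 : K₁ ∈ minimalSets F) (h2 : K₂ ∈ minimalSets F) (h3 : K₃ ∈ minimalSets F)
    (h12 : K₁ ≠ K₂) (h13 : K₁ ≠ K₃) (h23 : K₂ ≠ K₃) {x : S1}
    {g₁ g₂ g₃ : HomS1} (hg₁ : g₁ ∈ semigroupOf F) (hg₂ : g₂ ∈ semigroupOf F)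
    (hg₃ : g₃ ∈ semigroupOf F) (hx₁ : g₁ x ∈ K₁) (hx₂ : g₂ x ∈ K₂) (hx₃ : g₃ x ∈ K₃)
    : False := by
  classical
  -- x is in none of the three sets
  have hxK : ∀ (K K' : Set S1), K ∈ minimalSets F → K' ∈ minimalSets F → K ≠ K' →
      ∀ (g : HomS1), g ∈ semigroupOf F → g x ∈ K' → x ∉ K := by
    intro K K' hK hK' hne g hg hgx hxmem
    have := semigroup_inv hK.2.2.1 g hg x hxmem
    exact minimal_disjoint hK hK' hne _ this hgx
  have hx1 : x ∉ K₁ := hxK K₁ K₂ h1 h2 h12 g₂ hg₂ hx₂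
  have hx2 : x ∉ K₂ := hxK K₂ K₁ h2 h1 h12.symm g₁ hg₁ hx₁
  have hx3 : x ∉ K₃ := hxK K₃ K₁ h3 h1 h13.symm g₁ hg₁ hx₁
  -- trap data for each hit set
  have data : ∀ (K K' : Set S1), K ∈ minimalSets F → K' ∈ minimalSets F → K ≠ K' →
      ∀ (g : HomS1), g ∈ semigroupOf F → g x ∈ K → x ∉ K →
      ∃ ℓ ∈ K, ℓ ≠ x ∧
      ((∀ B : Set S1, IsClosed B → (∀ u ∈ B, g u ∈ B) →
          (∃ w ∈ B, 0 < tau x w ∧ tau x w < tau x ℓ) → ℓ ∈ B) ∨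
       (∀ B : Set S1, IsClosed B → (∀ u ∈ B, g u ∈ B) →
          (∃ w ∈ B, tau x ℓ < tau x w ∧ tau x w < 1) → ℓ ∈ B)) := by
    intro K K' hK hK' hne g hg hgx hxmem
    exact hit_data g K K' x hK.2.1 hK'.2.1 hK'.1 (minimal_disjoint hK hK' hne) hxmem
      (fun a ha => semigroup_inv hK.2.2.1 g hg a ha)
      (fun b hb => semigroup_inv hK'.2.2.1 g hg b hb)
      (hit_two_points hK hxmem hg hgx) hgx
  obtain ⟨ℓ₁, hℓ₁, hℓ₁x, t₁⟩ := data K₁ K₂ h1 h2 h12 g₁ hg₁ hx₁ hx1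
  obtain ⟨ℓ₂, hℓ₂, hℓ₂x, t₂⟩ := data K₂ K₁ h2 h1 h12.symm g₂ hg₂ hx₂ hx2
  obtain ⟨ℓ₃, hℓ₃, hℓ₃x, t₃⟩ := data K₃ K₁ h3 h1 h13.symm g₃ hg₃ hx₃ hx3
  -- specialize traps to the other minimal sets
  have inv12 : ∀ u ∈ K₂, g₁ u ∈ K₂ := fun u hu => semigroup_inv h2.2.2.1 g₁ hg₁ u hu
  have inv21 : ∀ u ∈ K₁, g₂ u ∈ K₁ := fun u hu => semigroup_inv h1.2.2.1 g₂ hg₂ u hu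
  have inv13 : ∀ u ∈ K₃, g₁ u ∈ K₃ := fun u hu => semigroup_inv h3.2.2.1 g₁ hg₁ u hu
  have inv31 : ∀ u ∈ K₁, g₃ u ∈ K₁ := fun u hu => semigroup_inv h1.2.2.1 g₃ hg₃ u hu
  have inv23 : ∀ u ∈ K₃, g₂ u ∈ K₃ := fun u hu => semigroup_inv h3.2.2.1 g₂ hg₂ u hu
  have inv32 : ∀ u ∈ K₂, g₃ u ∈ K₂ := fun u hu => semigroup_inv h2.2.2.1 g₃ hg₃ u hu
  rcases t₁ with t₁ | t₁ <;> rcases t₂ with t₂ | t₂ <;> rcases t₃ with t₃ | t₃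
  · exact clashL x ℓ₁ ℓ₂ K₁ K₂ (minimal_disjoint h1 h2 h12) hℓ₁ hℓ₂ hℓ₁x hℓ₂x
      (t₁ K₂ h2.2.1 inv12) (t₂ K₁ h1.2.1 inv21)
  · exact clashL x ℓ₁ ℓ₂ K₁ K₂ (minimal_disjoint h1 h2 h12) hℓ₁ hℓ₂ hℓ₁x hℓ₂x
      (t₁ K₂ h2.2.1 inv12) (t₂ K₁ h1.2.1 inv21)
  · exact clashL x ℓ₁ ℓ₃ K₁ K₃ (minimal_disjoint h1 h3 h13) hℓ₁ hℓ₃ hℓ₁x hℓ₃x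
      (t₁ K₃ h3.2.1 inv13) (t₃ K₁ h1.2.1 inv31)
  · exact clashR x ℓ₂ ℓ₃ K₂ K₃ (minimal_disjoint h2 h3 h23) hℓ₂ hℓ₃ hℓ₂x hℓ₃x
      (t₂ K₃ h3.2.1 inv23) (t₃ K₂ h2.2.1 inv32)
  · exact clashL x ℓ₂ ℓ₃ K₂ K₃ (minimal_disjoint h2 h3 h23) hℓ₂ hℓ₃ hℓ₂x hℓ₃x
      (t₂ K₃ h3.2.1 inv23) (t₃ K₂ h2.2.1 inv32)
  · exact clashR x ℓ₁ ℓ₃ K₁ K₃ (minimal_disjoint h1 h3 h13) hℓ₁ hℓ₃ hℓ₁x hℓ₃x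
      (t₁ K₃ h3.2.1 inv13) (t₃ K₁ h1.2.1 inv31)
  · exact clashR x ℓ₁ ℓ₂ K₁ K₂ (minimal_disjoint h1 h2 h12) hℓ₁ hℓ₂ hℓ₁x hℓ₂x
      (t₁ K₂ h2.2.1 inv12) (t₂ K₁ h1.2.1 inv21)
  · exact clashR x ℓ₁ ℓ₂ K₁ K₂ (minimal_disjoint h1 h2 h12) hℓ₁ hℓ₂ hℓ₁x hℓ₂x
      (t₁ K₂ h2.2.1 inv12) (t₂ K₁ h1.2.1 inv21)

/-- core : the orbit of a point meets at most two minimal sets -/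
theorem orbit_meets_at_most_two (F : Set HomS1) (x : S1) :
    ∃ K₁ K₂ : Set S1, ∀ K ∈ minimalSets F, (orbitOf F x ∩ K).Nonempty → K = K₁ ∨ K = K₂ := by
  classical
  by_cases h1 : ∃ K ∈ minimalSets F, (orbitOf F x ∩ K).Nonempty
  · obtain ⟨A, hA, hAne⟩ := h1
    by_cases h2 : ∃ K ∈ minimalSets F, (orbitOf F x ∩ K).Nonempty ∧ K ≠ A
    · obtain ⟨B, hB, hBne, hBA⟩ := h2
      refine ⟨A, B, ?_⟩
      intro K hK hKne
      by_contra hcon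
      push_neg at hcon
      obtain ⟨y₁, hy₁o, hy₁⟩ := hAne
      obtain ⟨y₂, hy₂o, hy₂⟩ := hBne
      obtain ⟨y₃, hy₃o, hy₃⟩ := hKne
      obtain ⟨gA, hgA, rfl⟩ := hy₁o
      obtain ⟨gB, hgB, rfl⟩ := hy₂o
      obtain ⟨gK, hgK, rfl⟩ := hy₃o
      exact three_hit hA hB hK hBA.symm (Ne.symm hcon.1) (Ne.symm hcon.2)
        hgA hgB hgK hy₁ hy₂ hy₃
    · push_neg at h2
      refine ⟨A, A, fun K hK hKne => Or.inl (h2 K hK hKne)⟩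
  · push_neg at h1
    refine ⟨∅, ∅, fun K hK hKne => ?_⟩
    rw [h1 K hK] at hKne
    simp at hKne

end AuxiliaryCircleDynamics

/-- Every chain of nonempty closed `F`-invariant subsets of the (compact) circle has a
lower bound, hence by Zorn's lemma a minimal invariant set exists. -/
theorem exists_minimalSet (F : Set HomS1) : (minimalSets F).Nonempty := by
  classical
  set S : Set (Set S1) := {K | K.Nonempty ∧ IsClosed K ∧ InvariantUnder F K} with hSdef
  have H : ∀ c ⊆ S, IsChain (· ⊆ ·) c → c.Nonempty → ∃ lb ∈ S, ∀ s ∈ c, lb ⊆ s := by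
    intro c hcS hchain hcne
    refine ⟨⋂₀ c, ⟨?_, ?_, ?_⟩, fun s hs => sInter_subset_of_mem hs⟩
    · haveI : Nonempty c := hcne.coe_sort
      refine IsCompact.nonempty_sInter_of_directed_nonempty_isCompact_isClosed
        ?_ (fun U hU => (hcS hU).1) (fun U hU => (hcS hU).2.1.isCompact)
        (fun U hU => (hcS hU).2.1)
      intro a ha b hb
      rcases hchain.total ha hb with h | h
      · exact ⟨a, ha, subset_rfl, h⟩
      · exact ⟨b, hb, h, subset_rfl⟩
    · exact isClosed_sInter fun s hs => (hcS hs).2.1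
    · rintro f hf y ⟨w, hw, rfl⟩ s hs
      exact (hcS hs).2.2 f hf ⟨w, hw s hs, rfl⟩
  obtain ⟨m, -, hm⟩ := zorn_superset_nonempty S H Set.univ
    ⟨univ_nonempty, isClosed_univ, fun f _ => subset_univ _⟩
  refine ⟨m, hm.prop.1, hm.prop.2.1, hm.prop.2.2, ?_⟩
  intro K' hK' hne hcl hinv
  exact subset_antisymm hK' (hm.le_of_le ⟨hne, hcl, hinv⟩ hK')

/-- **Proposition 3.1.** If the collection of `F`-invariant minimal sets is finite, then
for every `x` there are minimal sets `K₁, K₂` such that the orbit of `x` under the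
generated semigroup does not intersect any other minimal set. -/
theorem statement4 (F : Set HomS1) (hfin : (minimalSets F).Finite) :
    ∀ x : S1, ∃ K₁ ∈ minimalSets F, ∃ K₂ ∈ minimalSets F,
      ∀ K ∈ minimalSets F, K ≠ K₁ → K ≠ K₂ → orbitOf F x ∩ K = ∅ := by
  classical
  intro x
  obtain ⟨K₀, hK₀⟩ := exists_minimalSet F
  obtain ⟨A, B, hAB⟩ := orbit_meets_at_most_two F x
  refine ⟨if A ∈ minimalSets F then A else K₀, by split <;> simp_all,
          if B ∈ minimalSets F then B else K₀, by split <;> simp_all, ?_⟩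
  intro K hK h1 h2
  by_contra hne
  rcases hAB K hK (Set.nonempty_iff_ne_empty.2 hne) with rfl | rfl
  · exact h1 (by simp [hK])
  · exact h2 (by simp [hK])


end
end

section
/- Assume F ⊆ Hom(S¹) and that the collection K_F of F-invariant minimal sets is finite with at least two elements. Fix K ∈ K_F, enumerate E_K = {I_{K,1},…,I_{K,ℓ_K}} in counterclockwise order. Then for every j ∈ {1,…,ℓ_K} and every f ∈ F there exist k_j, r_j ∈ {1,…,ℓ_K} such that f(I_{K,j}) ⊆ I_{K,k_j} and f(I_{K,r_j}) ⊆ I_{K,j}. -/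
open MeasureTheory Set Function Filter Topology
open scoped ENNReal NNReal

noncomputable section

namespace L33

/-! ### Basics about `argS1` and the parametrization `e` -/

lemma argS1_mem (x : S1) : argS1 x ∈ Ico (0:ℝ) 1 := by
  have h := (AddCircle.equivIco 1 0 x).2
  simpa [argS1] using h

lemma argS1_nonneg (x : S1) : 0 ≤ argS1 x := (argS1_mem x).1
lemma argS1_lt_one (x : S1) : argS1 x < 1 := (argS1_mem x).2

lemma coe_argS1 (x : S1) : ((argS1 x : ℝ) : S1) = x :=
  (AddCircle.equivIco 1 0).symm_apply_apply x

lemma argS1_coe {t : ℝ} (h : t ∈ Ico (0:ℝ) 1) : argS1 ((t : ℝ) : S1) = t := by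
  have h1 : ((argS1 ((t:ℝ):S1) : ℝ) : S1) = ((t:ℝ) : S1) := coe_argS1 _
  have h2 : argS1 ((t:ℝ):S1) ∈ Ico (0:ℝ) (0+1) := by simpa using argS1_mem ((t:ℝ):S1)
  have h3 : t ∈ Ico (0:ℝ) (0+1) := by simpa using h
  exact (AddCircle.coe_eq_coe_iff_of_mem_Ico h2 h3).mp h1

lemma argS1_zero : argS1 (0 : S1) = 0 := by
  have : ((0:ℝ) : S1) = (0 : S1) := by norm_cast
  rw [← this, argS1_coe] ; exact ⟨le_refl _, one_pos⟩

lemma argS1_eq_zero_iff {x : S1} : argS1 x = 0 ↔ x = 0 := by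
  constructor
  · intro h
    have := coe_argS1 x
    rw [h] at this
    rw [← this]; norm_cast
  · rintro rfl; exact argS1_zero

/-- parametrization of the circle starting at `z`. -/
def e (z : S1) (t : ℝ) : S1 := z + ((t : ℝ) : S1)

lemma e_continuous (z : S1) : Continuous (e z) :=
  (continuous_const.add (AddCircle.continuous_mk' 1))

lemma e_zero (z : S1) : e z 0 = z := by
  have : (((0:ℝ)) : S1) = 0 := by norm_cast
  simp [e, this]

lemma coe_one_S1 : (((1:ℝ)) : S1) = 0 := AddCircle.coe_period 1

lemma e_add (z : S1) (s t : ℝ) : e (e z s) t = e z (s + t) := by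
  simp only [e, AddCircle.coe_add]
  abel

lemma e_one (z : S1) : e z 1 = z := by
  simp only [e, coe_one_S1, add_zero]

lemma e_add_one (z : S1) (t : ℝ) : e z (t + 1) = e z t := by
  rw [← e_add, e_add]
  rw [show t + 1 = 1 + t by ring, ← e_add, e_one]

lemma e_Phi (z w : S1) : e z (argS1 (w - z)) = w := by
  simp only [e, coe_argS1, add_sub_cancel]

lemma Phi_e {z : S1} {t : ℝ} (h : t ∈ Ico (0:ℝ) 1) : argS1 (e z t - z) = t := by
  simp only [e, add_sub_cancel_left]
  exact argS1_coe h

lemma coe_int_S1 (n : ℤ) : (((n : ℝ)) : S1) = 0 := by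
  refine (QuotientAddGroup.eq_zero_iff _).mpr ?_
  exact ⟨n, by simp⟩

lemma e_eq_iff {z : S1} {s t : ℝ} : e z s = e z t ↔ ∃ n : ℤ, s = t + n := by
  constructor
  · intro h
    have h2 : ((s:ℝ):S1) = ((t:ℝ):S1) := by
      have := add_left_cancel (a := z) (by simpa [e] using h)
      exact this
    have h3 : ((s - t : ℝ) : S1) = 0 := by
      have : ((s - t : ℝ) : S1) = ((s:ℝ):S1) - ((t:ℝ):S1) := by
        rw [sub_eq_add_neg, AddCircle.coe_add, AddCircle.coe_neg, sub_eq_add_neg]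
      rw [this, h2, sub_self]
    obtain ⟨n, hn⟩ := (QuotientAddGroup.eq_zero_iff _).mp h3
    refine ⟨n, ?_⟩
    have h4 : n • (1:ℝ) = s - t := hn
    rw [zsmul_eq_mul, mul_one] at h4
    linarith
  · rintro ⟨n, rfl⟩
    simp only [e]
    congr 1
    rw [AddCircle.coe_add, coe_int_S1, add_zero]

lemma e_inj {z : S1} {s t : ℝ} (h : e z s = e z t) (hd : |s - t| < 1) : s = t := by
  obtain ⟨n, hn⟩ := e_eq_iff.mp h
  have hn' : |(n:ℝ)| < 1 := by rw [hn] at hd; simpa using hd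
  have : n = 0 := by
    have h5 := abs_lt.mp hn'
    have h1 : (-1:ℤ) < n := by exact_mod_cast h5.1
    have h2 : n < (1:ℤ) := by exact_mod_cast h5.2
    omega
  rw [hn, this]; simp

/-! ### Arcs as images of intervals -/

lemma openArc_eq (a b : S1) : openArc a b = e a '' Ioo 0 (argS1 (b - a)) := by
  ext w
  constructor
  · rintro ⟨h1, h2⟩
    exact ⟨argS1 (w - a), ⟨h1, h2⟩, e_Phi a w⟩
  · rintro ⟨t, ⟨ht1, ht2⟩, rfl⟩
    have ht : t ∈ Ico (0:ℝ) 1 := ⟨le_of_lt ht1, lt_trans ht2 (argS1_lt_one _)⟩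
    exact ⟨by rw [Phi_e ht]; exact ht1, by rw [Phi_e ht]; exact ht2⟩

lemma closedArc_eq (x y : S1) : closedArc x y = e x '' Icc 0 (argS1 (y - x)) := by
  ext w
  simp only [closedArc, mem_insert_iff]
  constructor
  · rintro (rfl | rfl | hw)
    · exact ⟨0, ⟨le_refl _, argS1_nonneg _⟩, e_zero _⟩
    · exact ⟨argS1 (w - x), ⟨argS1_nonneg _, le_refl _⟩, e_Phi _ _⟩
    · rw [openArc_eq] at hw
      rcases hw with ⟨t, ht, rfl⟩
      exact ⟨t, Ioo_subset_Icc_self ht, rfl⟩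
  · rintro ⟨t, ⟨ht0, ht1⟩, rfl⟩
    rcases eq_or_lt_of_le ht0 with h | h
    · left; rw [← h, e_zero]
    rcases eq_or_lt_of_le ht1 with h2 | h2
    · right; left; rw [h2, e_Phi]
    · right; right; rw [openArc_eq]; exact ⟨t, ⟨h, h2⟩, rfl⟩

lemma left_mem_closedArc (x y : S1) : x ∈ closedArc x y := mem_insert _ _
lemma right_mem_closedArc (x y : S1) : y ∈ closedArc x y := mem_insert_of_mem _ (mem_insert _ _)
lemma openArc_subset_closedArc (x y : S1) : openArc x y ⊆ closedArc x y :=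
  fun _ h => mem_insert_of_mem _ (mem_insert_of_mem _ h)

lemma closedArc_isCompact (x y : S1) : IsCompact (closedArc x y) := by
  rw [closedArc_eq]; exact isCompact_Icc.image (e_continuous x)

lemma closedArc_isClosed (x y : S1) : IsClosed (closedArc x y) :=
  (closedArc_isCompact x y).isClosed

lemma closedArc_preconn (x y : S1) : IsPreconnected (closedArc x y) := by
  rw [closedArc_eq]
  exact (isPreconnected_Icc).image _ (e_continuous x).continuousOn

lemma isOpenMap_e (z : S1) : IsOpenMap (e z) := by
  have h1 : IsOpenMap ((↑) : ℝ → S1) := QuotientAddGroup.isOpenMap_coe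
  have h2 : IsOpenMap (fun w : S1 => z + w) := (Homeomorph.addLeft z).isOpenMap
  exact h2.comp h1

lemma openArc_isOpen (a b : S1) : IsOpen (openArc a b) := by
  rw [openArc_eq]; exact isOpenMap_e a _ isOpen_Ioo

lemma openArc_preconn (a b : S1) : IsPreconnected (openArc a b) := by
  rw [openArc_eq]
  exact (isPreconnected_Ioo).image _ (e_continuous a).continuousOn

lemma closedArc_self (x : S1) : closedArc x x = {x} := by
  have h : argS1 (x - x) = 0 := by rw [sub_self, argS1_zero]
  rw [closedArc_eq, h, Icc_self, image_singleton, e_zero]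

lemma not_mem_closedArc_of_param {x y : S1} {s : ℝ}
    (hs1 : argS1 (y - x) < s) (hs2 : s < 1) : e x s ∉ closedArc x y := by
  rw [closedArc_eq]
  rintro ⟨t, ⟨ht0, ht1⟩, het⟩
  have hlt : argS1 (y - x) < 1 := argS1_lt_one _
  have : t = s := e_inj het (by rw [abs_lt]; constructor <;> linarith)
  linarith

lemma closedArc_ne_univ (x y : S1) : closedArc x y ≠ univ := by
  intro h
  set c := argS1 (y - x) with hc
  have hc1 : c < 1 := argS1_lt_one _
  have hc0 : 0 ≤ c := argS1_nonneg _
  have : e x ((c+1)/2) ∉ closedArc x y :=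
    not_mem_closedArc_of_param (by rw [← hc]; linarith) (by linarith)
  exact this (h ▸ mem_univ _)

lemma frontier_closedArc_subset (x y : S1) : frontier (closedArc x y) ⊆ {x, y} := by
  intro w hw
  rw [frontier, (closedArc_isClosed x y).closure_eq] at hw
  have h1 : w ∈ closedArc x y := hw.1
  have h2 : w ∉ openArc x y := fun hop =>
    hw.2 (interior_maximal (openArc_subset_closedArc x y) (openArc_isOpen x y) hop)
  rcases h1 with h | h | h
  · exact Or.inl h
  · exact Or.inr h
  · exact absurd h h2

lemma argS1_sub_ne_zero {x y : S1} (h : x ≠ y) : argS1 (y - x) ≠ 0 := by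
  intro h0
  rw [argS1_eq_zero_iff, sub_eq_zero] at h0
  exact h h0.symm

lemma mem_frontier_closedArc {x y : S1} (hxy : x ≠ y) :
    x ∈ frontier (closedArc x y) ∧ y ∈ frontier (closedArc x y) := by
  set c := argS1 (y - x) with hc
  have hc1 : c < 1 := argS1_lt_one _
  have hc0 : 0 < c := lt_of_le_of_ne (argS1_nonneg _) (Ne.symm (argS1_sub_ne_zero hxy))
  have hclos : ∀ u : S1, ∀ t₀ : ℝ, e x t₀ = u →
      (∀ δ : ℝ, 0 < δ → ∃ s : ℝ, |s - t₀| < δ ∧ c < s ∧ s < 1) →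
      u ∈ closure (closedArc x y)ᶜ := by
    intro u t₀ ht₀ hs
    rw [mem_closure_iff_nhds]
    intro U hU
    have hcont : ContinuousAt (e x) t₀ := (e_continuous x).continuousAt
    have hpre : (e x) ⁻¹' U ∈ 𝓝 t₀ := hcont (ht₀ ▸ hU)
    obtain ⟨δ, hδ, hball⟩ := Metric.mem_nhds_iff.mp hpre
    obtain ⟨s, hs1, hs2, hs3⟩ := hs δ hδ
    refine ⟨e x s, hball ?_, not_mem_closedArc_of_param (by rw [← hc]; exact hs2) hs3⟩
    simp only [Metric.mem_ball, Real.dist_eq]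
    exact hs1
  constructor
  · rw [frontier_eq_closure_inter_closure]
    refine ⟨subset_closure (left_mem_closedArc x y), ?_⟩
    refine hclos x 1 (e_one x) (fun δ hδ => ?_)
    refine ⟨(max c (1 - δ) + 1)/2, ?_, ?_, ?_⟩
    · have h1 : 1 - δ ≤ max c (1-δ) := le_max_right _ _
      have h2 : max c (1-δ) < 1 := max_lt hc1 (by linarith)
      rw [abs_lt]; constructor <;> [linarith; linarith]
    · have h1 : c ≤ max c (1-δ) := le_max_left _ _
      linarith [max_lt hc1 (show 1 - δ < 1 by linarith)]
    · have h2 : max c (1-δ) < 1 := max_lt hc1 (by linarith)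
      linarith
  · rw [frontier_eq_closure_inter_closure]
    refine ⟨subset_closure (right_mem_closedArc x y), ?_⟩
    refine hclos y c (e_Phi x y) (fun δ hδ => ?_)
    refine ⟨min (c + δ/2) ((c+1)/2), ?_, ?_, ?_⟩
    · have h1 : min (c + δ/2) ((c+1)/2) ≤ c + δ/2 := min_le_left _ _
      have h2 : c < min (c + δ/2) ((c+1)/2) := lt_min (by linarith) (by linarith)
      rw [abs_lt]; constructor <;> linarith
    · exact lt_min (by linarith) (by linarith)
    · have := min_le_right (c + δ/2) ((c+1)/2)
      linarith

/-! ### Chart lemmas -/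

lemma e_arg (z x : S1) : e z (argS1 (x - z)) = x := e_Phi z x

lemma e_e (z x : S1) (s : ℝ) : e x s = e z (argS1 (x - z) + s) := by
  conv_lhs => rw [← e_arg z x]
  rw [e_add]

lemma chart_closedArc {z x y : S1} (hz : z ∉ closedArc x y) :
    0 < argS1 (x - z) ∧ argS1 (x - z) ≤ argS1 (y - z) ∧ argS1 (y - z) < 1 ∧
      (∀ w, w ∈ closedArc x y ↔ argS1 (w - z) ∈ Icc (argS1 (x - z)) (argS1 (y - z))) := by
  set c := argS1 (y - x) with hcdef
  set px := argS1 (x - z) with hpxdef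
  have hc0 : 0 ≤ c := argS1_nonneg _
  have hc1 : c < 1 := argS1_lt_one _
  have hpx1 : px < 1 := argS1_lt_one _
  have hxz : x ≠ z := fun h => hz (h ▸ left_mem_closedArc x y)
  have hpx0 : 0 < px := by
    rcases lt_or_eq_of_le (argS1_nonneg (x - z)) with h | h
    · exact h
    · exfalso; apply hxz; rw [← sub_eq_zero]; exact (argS1_eq_zero_iff.mp h.symm)
  have hlt : px + c < 1 := by
    by_contra hge
    push_neg at hge
    apply hz
    rw [closedArc_eq]
    refine ⟨1 - px, ⟨by linarith, by linarith⟩, ?_⟩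
    rw [e_e z x, ← hpxdef]
    have : px + (1 - px) = 1 := by ring
    rw [this, e_one]
  have key : ∀ s ∈ Icc (0:ℝ) c, argS1 (e x s - z) = px + s := by
    intro s hs
    rw [e_e z x, ← hpxdef, Phi_e ⟨by linarith [hs.1], by linarith [hs.2]⟩]
  have qy : argS1 (y - z) = px + c := by
    have h5 := key c ⟨hc0, le_refl c⟩
    have h6 : e x c = y := by rw [hcdef]; exact e_Phi x y
    rwa [h6] at h5
  refine ⟨hpx0, by rw [qy]; linarith, by rw [qy]; linarith, fun w => ?_⟩
  constructor
  · intro hw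
    rw [closedArc_eq] at hw
    obtain ⟨s, hs, rfl⟩ := hw
    rw [key s hs, qy]
    exact ⟨by linarith [hs.1], by linarith [hs.2]⟩
  · intro hw
    rw [qy] at hw
    rw [closedArc_eq]
    refine ⟨argS1 (w - z) - px, ⟨by linarith [hw.1], by linarith [hw.2]⟩, ?_⟩
    rw [e_e z x, ← hpxdef]
    have : px + (argS1 (w - z) - px) = argS1 (w - z) := by ring
    rw [this, e_arg]

lemma e_sub_e (z : S1) (p q : ℝ) : e z q - e z p = (((q - p : ℝ)) : S1) := by
  simp only [e]
  have : ((q - p : ℝ) : S1) = ((q:ℝ):S1) - ((p:ℝ):S1) := by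
    rw [sub_eq_add_neg, AddCircle.coe_add, AddCircle.coe_neg, sub_eq_add_neg]
  rw [this]
  abel

lemma closedArc_of_chart {z : S1} {p q : ℝ} (h0 : 0 < p) (hpq : p ≤ q) (h1 : q < 1) :
    closedArc (e z p) (e z q) = e z '' Icc p q ∧
      (∀ w, w ∈ closedArc (e z p) (e z q) ↔ argS1 (w - z) ∈ Icc p q) ∧
      z ∉ closedArc (e z p) (e z q) := by
  have harg : argS1 (e z q - e z p) = q - p := by
    rw [e_sub_e, argS1_coe ⟨by linarith, by linarith⟩]
  have him : closedArc (e z p) (e z q) = e z '' Icc p q := by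
    rw [closedArc_eq, harg]
    ext u
    constructor
    · rintro ⟨s, hs, rfl⟩
      exact ⟨p + s, ⟨by linarith [hs.1], by linarith [hs.2]⟩, by rw [e_add]⟩
    · rintro ⟨t, ht, rfl⟩
      exact ⟨t - p, ⟨by linarith [ht.1], by linarith [ht.2]⟩, by rw [e_add]; ring_nf⟩
  have hmem : ∀ w, w ∈ closedArc (e z p) (e z q) ↔ argS1 (w - z) ∈ Icc p q := by
    intro w
    rw [him]
    constructor
    · rintro ⟨t, ht, rfl⟩
      rw [Phi_e ⟨by linarith [ht.1], by linarith [ht.2]⟩]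
      exact ht
    · intro hw
      exact ⟨argS1 (w - z), hw, e_arg z w⟩
  refine ⟨him, hmem, ?_⟩
  intro hzmem
  rw [hmem z] at hzmem
  rw [sub_self, argS1_zero] at hzmem
  linarith [hzmem.1]

/-! ### Connectedness tricks -/

lemma trick_open {S U : Set S1} (hS : IsPreconnected S) (hU : IsOpen U)
    (hne : (S ∩ U).Nonempty) (hfr : S ∩ frontier U = ∅) : S ⊆ U := by
  have hsub : S ⊆ U ∪ (closure U)ᶜ := by
    intro s hs
    by_cases h : s ∈ closure U
    · rw [closure_eq_interior_union_frontier] at h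
      rcases h with h | h
      · exact Or.inl (hU.interior_eq ▸ h)
      · exact absurd (mem_inter hs h) (by rw [hfr]; exact notMem_empty s)
    · exact Or.inr h
  have hdisj : Disjoint U (closure U)ᶜ :=
    Set.disjoint_left.mpr (fun a ha hc => hc (subset_closure ha))
  exact hS.subset_left_of_subset_union hU (isClosed_closure).isOpen_compl hdisj hsub hne

lemma trick_closed {S C : Set S1} (hS : IsPreconnected S) (_hC : IsClosed C)
    (hne : (S ∩ C).Nonempty) (hfr : S ∩ frontier C = ∅) : S ⊆ C := by
  have h1 : (S ∩ interior C).Nonempty := by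
    obtain ⟨s, hsS, hsC⟩ := hne
    refine ⟨s, hsS, ?_⟩
    have : s ∈ closure C := subset_closure hsC
    rw [closure_eq_interior_union_frontier] at this
    rcases this with h | h
    · exact h
    · exact absurd (mem_inter hsS h) (by rw [hfr]; exact notMem_empty s)
  have h2 : S ∩ frontier (interior C) = ∅ := by
    apply eq_empty_of_subset_empty
    intro a ⟨ha1, ha2⟩
    rw [← hfr]
    exact ⟨ha1, frontier_interior_subset ha2⟩
  exact (trick_open hS isOpen_interior h1 h2).trans interior_subset

/-! ### Gaps of a closed set -/

def TT (K : Set S1) (w : S1) : Set ℝ := {t | t ∈ Icc (0:ℝ) 1 ∧ e w t ∈ K}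

noncomputable def gb (K : Set S1) (w : S1) : ℝ := sInf (TT K w)
noncomputable def gc (K : Set S1) (w : S1) : ℝ := sSup (TT K w)

def gap (K : Set S1) (w : S1) : Set S1 := e w '' Ioo (gc K w - 1) (gb K w)

section GapLemmas

variable {K : Set S1} {w : S1}

lemma TT_isClosed (hKcl : IsClosed K) : IsClosed (TT K w) :=
  isClosed_Icc.inter (hKcl.preimage (e_continuous w))

lemma TT_subset (hw : w ∉ K) : TT K w ⊆ Ioo (0:ℝ) 1 := by
  rintro t ⟨⟨ht0, ht1⟩, htK⟩
  constructor
  · rcases lt_or_eq_of_le ht0 with h | h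
    · exact h
    · exfalso; rw [← h, e_zero] at htK; exact hw htK
  · rcases lt_or_eq_of_le ht1 with h | h
    · exact h
    · exfalso; rw [h, e_one] at htK; exact hw htK

lemma TT_nonempty (hKne : K.Nonempty) : (TT K w).Nonempty := by
  obtain ⟨k, hk⟩ := hKne
  exact ⟨argS1 (k - w), ⟨⟨argS1_nonneg _, le_of_lt (argS1_lt_one _)⟩, by rw [e_arg]; exact hk⟩⟩

lemma TT_bddBelow : BddBelow (TT K w) := ⟨0, fun t ht => ht.1.1⟩
lemma TT_bddAbove : BddAbove (TT K w) := ⟨1, fun t ht => ht.1.2⟩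

lemma gb_mem (hKcl : IsClosed K) (hKne : K.Nonempty) : gb K w ∈ TT K w :=
  (TT_isClosed hKcl).csInf_mem (TT_nonempty hKne) TT_bddBelow

lemma gc_mem (hKcl : IsClosed K) (hKne : K.Nonempty) : gc K w ∈ TT K w :=
  (TT_isClosed hKcl).csSup_mem (TT_nonempty hKne) TT_bddAbove

lemma gb_pos (hKcl : IsClosed K) (hKne : K.Nonempty) (hw : w ∉ K) : 0 < gb K w :=
  (TT_subset hw (gb_mem hKcl hKne)).1

lemma gc_lt_one (hKcl : IsClosed K) (hKne : K.Nonempty) (hw : w ∉ K) : gc K w < 1 :=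
  (TT_subset hw (gc_mem hKcl hKne)).2

lemma gb_le_gc (hKcl : IsClosed K) (hKne : K.Nonempty) : gb K w ≤ gc K w :=
  csInf_le_csSup (TT_nonempty hKne) TT_bddBelow TT_bddAbove

lemma gb_le {t : ℝ} (ht : t ∈ TT K w) : gb K w ≤ t := csInf_le TT_bddBelow ht
lemma le_gc {t : ℝ} (ht : t ∈ TT K w) : t ≤ gc K w := le_csSup TT_bddAbove ht

lemma mem_gap_self (hKcl : IsClosed K) (hKne : K.Nonempty) (hw : w ∉ K) : w ∈ gap K w :=
  ⟨0, ⟨by linarith [gc_lt_one hKcl hKne hw], gb_pos hKcl hKne hw⟩, e_zero w⟩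

lemma gap_isOpen : IsOpen (gap K w) := isOpenMap_e w _ isOpen_Ioo

lemma gap_preconn : IsPreconnected (gap K w) :=
  (isPreconnected_Ioo).image _ (e_continuous w).continuousOn

lemma gap_inter_K (hKcl : IsClosed K) (hKne : K.Nonempty) (hw : w ∉ K) : gap K w ∩ K = ∅ := by
  have h1 : gb K w ≤ 1 := le_of_lt (TT_subset hw (gb_mem hKcl hKne)).2
  have h2 : 0 < gc K w := (TT_subset hw (gc_mem hKcl hKne)).1
  apply eq_empty_of_subset_empty
  rintro u ⟨⟨t, ⟨htl, htu⟩, rfl⟩, huK⟩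
  rcases le_or_gt 0 t with h | h
  · have : t ∈ TT K w := ⟨⟨h, by linarith⟩, huK⟩
    linarith [gb_le this]
  · have : t + 1 ∈ TT K w := ⟨⟨by linarith, by linarith⟩, by rw [e_add_one]; exact huK⟩
    linarith [le_gc this]

lemma compl_gap (hKcl : IsClosed K) (hKne : K.Nonempty) (hw : w ∉ K) :
    (gap K w)ᶜ = e w '' Icc (gb K w) (gc K w) := by
  have hb0 : 0 < gb K w := gb_pos hKcl hKne hw
  have hc1 : gc K w < 1 := gc_lt_one hKcl hKne hw
  have hbc : gb K w ≤ gc K w := gb_le_gc hKcl hKne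
  ext u
  simp only [mem_compl_iff]
  constructor
  · intro hu
    set t₀ := argS1 (u - w) with ht₀def
    have ht₀ : t₀ ∈ Ico (0:ℝ) 1 := argS1_mem _
    have heu : e w t₀ = u := e_arg w u
    rcases lt_or_ge t₀ (gb K w) with h | h
    · exfalso; exact hu ⟨t₀, ⟨by linarith [ht₀.1], h⟩, heu⟩
    · rcases le_or_gt t₀ (gc K w) with h2 | h2
      · exact ⟨t₀, ⟨h, h2⟩, heu⟩
      · exfalso
        refine hu ⟨t₀ - 1, ⟨by linarith, by linarith [ht₀.2]⟩, ?_⟩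
        have h9 : e w (t₀ - 1) = e w t₀ := by
          conv_rhs => rw [show t₀ = (t₀ - 1) + 1 by ring]
          rw [e_add_one]
        rw [h9, heu]
  · rintro ⟨t, ⟨htl, htu⟩, rfl⟩ ⟨s, ⟨hsl, hsu⟩, hes⟩
    obtain ⟨n, hn⟩ := e_eq_iff.mp hes
    have h1 : (n:ℝ) = s - t := by linarith [hn]
    have h2 : (-1:ℝ) < n := by rw [h1]; linarith
    have h3 : (n:ℝ) < 0 := by rw [h1]; linarith
    have : (0:ℤ) ≤ n ∨ n ≤ -1 := by omega
    rcases this with h | h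
    · have : (0:ℝ) ≤ n := by exact_mod_cast h
      linarith
    · have : (n:ℝ) ≤ -1 := by exact_mod_cast h
      linarith

lemma frontier_gap_subset (hKcl : IsClosed K) (hKne : K.Nonempty) (hw : w ∉ K) :
    frontier (gap K w) ⊆ {e w (gb K w), e w (gc K w)} := by
  have hb0 : 0 < gb K w := gb_pos hKcl hKne hw
  have hc1 : gc K w < 1 := gc_lt_one hKcl hKne hw
  have hbc : gb K w ≤ gc K w := gb_le_gc hKcl hKne
  intro u hu
  have h1 : u ∈ closure (gap K w) := hu.1
  have h2 : u ∉ gap K w := by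
    intro hu2
    exact hu.2 (by rwa [gap_isOpen.interior_eq])
  have hcls : closure (gap K w) ⊆ e w '' Icc (gc K w - 1) (gb K w) := by
    apply closure_minimal _ ((isCompact_Icc.image (e_continuous w)).isClosed)
    exact image_mono Ioo_subset_Icc_self
  obtain ⟨t, ⟨htl, htu⟩, heq⟩ := hcls h1
  have h3 : u ∈ e w '' Icc (gb K w) (gc K w) := by
    rw [← compl_gap hKcl hKne hw]; exact h2
  obtain ⟨s, ⟨hsl, hsu⟩, heq2⟩ := h3
  rw [← heq] at heq2
  obtain ⟨n, hn⟩ := e_eq_iff.mp heq2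
  have h4 : (n:ℝ) = s - t := by linarith [hn]
  have h5 : (0:ℝ) ≤ n := by rw [h4]; linarith
  have h6 : (n:ℝ) ≤ 1 := by rw [h4]; linarith
  have h7 : n = 0 ∨ n = 1 := by
    have h5' : (0:ℤ) ≤ n := by exact_mod_cast h5
    have h6' : n ≤ (1:ℤ) := by exact_mod_cast h6
    omega
  rcases h7 with rfl | rfl
  · left
    have hst : s = t := by rw [hn]; simp
    have hteq : t = gb K w := le_antisymm htu (hst ▸ hsl)
    rw [← heq, hteq]
  · right
    have hst : s = t + 1 := by rw [hn]; norm_num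
    have hteq : t = gc K w - 1 := le_antisymm (by linarith) htl
    have h8 : e w (gc K w - 1) = e w (gc K w) := by
      conv_rhs => rw [show gc K w = (gc K w - 1) + 1 by ring]
      rw [e_add_one]
    rw [mem_singleton_iff, ← heq, hteq, h8]

lemma gap_endpoint_b_mem (hKcl : IsClosed K) (hKne : K.Nonempty) : e w (gb K w) ∈ K :=
  (gb_mem hKcl hKne).2

lemma gap_endpoint_c_mem (hKcl : IsClosed K) (hKne : K.Nonempty) : e w (gc K w) ∈ K :=
  (gc_mem hKcl hKne).2

lemma frontier_gap_subset_K (hKcl : IsClosed K) (hKne : K.Nonempty) (hw : w ∉ K) :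
    frontier (gap K w) ⊆ K := by
  intro u hu
  rcases frontier_gap_subset hKcl hKne hw hu with h | h
  · rw [h]; exact gap_endpoint_b_mem hKcl hKne
  · rw [mem_singleton_iff] at h
    rw [h]; exact gap_endpoint_c_mem hKcl hKne

lemma gap_frontier_disj {w' : S1} (hKcl : IsClosed K) (hKne : K.Nonempty) (hw : w ∉ K)
    (hw' : w' ∉ K) : gap K w' ∩ frontier (gap K w) = ∅ := by
  apply eq_empty_of_subset_empty
  rintro a ⟨h1, h2⟩
  rw [← gap_inter_K hKcl hKne hw']
  exact ⟨h1, frontier_gap_subset_K hKcl hKne hw h2⟩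

lemma gap_eq_of_mem {w' : S1} (hKcl : IsClosed K) (hKne : K.Nonempty) (hw : w ∉ K)
    (hw' : w' ∉ K) (hmem : w' ∈ gap K w) : gap K w' = gap K w := by
  apply Subset.antisymm
  · exact trick_open gap_preconn gap_isOpen
      ⟨w', mem_gap_self hKcl hKne hw', hmem⟩ (gap_frontier_disj hKcl hKne hw hw')
  · exact trick_open gap_preconn gap_isOpen
      ⟨w', hmem, mem_gap_self hKcl hKne hw'⟩ (gap_frontier_disj hKcl hKne hw' hw)

end GapLemmas

/-! ### The finite family of gaps of `K` meeting `L`, and how `f` permutes it -/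

def SigmaL (K L : Set S1) : Set (Set S1) := (fun l => gap K l) '' L

section Perm

variable {K L : Set S1} {f : HomS1}

lemma not_mem_K_of_mem_L (hdisj : K ∩ L = ∅) {l : S1} (hl : l ∈ L) : l ∉ K :=
  fun h => (hdisj ▸ (⟨h, hl⟩ : l ∈ K ∩ L) : l ∈ (∅ : Set S1))

lemma SigmaL_gap_mem {l : S1} (hl : l ∈ L) : gap K l ∈ SigmaL K L := ⟨l, hl, rfl⟩

lemma SigmaL_spec {γ : Set S1} (hγ : γ ∈ SigmaL K L) : ∃ l ∈ L, gap K l = γ := hγ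

lemma SigmaL_isOpen {γ : Set S1} (hγ : γ ∈ SigmaL K L) : IsOpen γ := by
  obtain ⟨l, _, rfl⟩ := hγ; exact gap_isOpen

lemma SigmaL_preconn {γ : Set S1} (hγ : γ ∈ SigmaL K L) : IsPreconnected γ := by
  obtain ⟨l, _, rfl⟩ := hγ; exact gap_preconn

lemma SigmaL_inter_K (hKcl : IsClosed K) (hKne : K.Nonempty) (hdisj : K ∩ L = ∅)
    {γ : Set S1} (hγ : γ ∈ SigmaL K L) : γ ∩ K = ∅ := by
  obtain ⟨l, hl, rfl⟩ := hγ
  exact gap_inter_K hKcl hKne (not_mem_K_of_mem_L hdisj hl)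

lemma SigmaL_inter_L_nonempty (hKcl : IsClosed K) (hKne : K.Nonempty) (hdisj : K ∩ L = ∅)
    {γ : Set S1} (hγ : γ ∈ SigmaL K L) : (γ ∩ L).Nonempty := by
  obtain ⟨l, hl, rfl⟩ := hγ
  exact ⟨l, mem_gap_self hKcl hKne (not_mem_K_of_mem_L hdisj hl), hl⟩

lemma SigmaL_frontier_K (hKcl : IsClosed K) (hKne : K.Nonempty) (hdisj : K ∩ L = ∅)
    {γ : Set S1} (hγ : γ ∈ SigmaL K L) : frontier γ ⊆ K := by
  obtain ⟨l, hl, rfl⟩ := hγ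
  exact frontier_gap_subset_K hKcl hKne (not_mem_K_of_mem_L hdisj hl)

lemma SigmaL_eq_of_inter (hKcl : IsClosed K) (hKne : K.Nonempty) (hdisj : K ∩ L = ∅)
    {γ₁ γ₂ : Set S1} (h₁ : γ₁ ∈ SigmaL K L) (h₂ : γ₂ ∈ SigmaL K L)
    (hne : (γ₁ ∩ γ₂).Nonempty) : γ₁ = γ₂ := by
  obtain ⟨u, hu₁, hu₂⟩ := hne
  have huK : u ∉ K := by
    intro h
    have := SigmaL_inter_K hKcl hKne hdisj h₁
    exact (this ▸ (⟨hu₁, h⟩ : u ∈ γ₁ ∩ K) : u ∈ (∅ : Set S1))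
  obtain ⟨l₁, hl₁, rfl⟩ := h₁
  obtain ⟨l₂, hl₂, rfl⟩ := h₂
  show gap K l₁ = gap K l₂
  rw [← gap_eq_of_mem hKcl hKne (not_mem_K_of_mem_L hdisj hl₁) huK hu₁,
      ← gap_eq_of_mem hKcl hKne (not_mem_K_of_mem_L hdisj hl₂) huK hu₂]

lemma SigmaL_finite (hKcl : IsClosed K) (hKne : K.Nonempty) (hLcl : IsClosed L)
    (hdisj : K ∩ L = ∅) : (SigmaL K L).Finite := by
  have hLcomp : IsCompact L := hLcl.isCompact
  have hcover : L ⊆ ⋃ l ∈ L, gap K l := fun l hl =>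
    mem_biUnion hl (mem_gap_self hKcl hKne (not_mem_K_of_mem_L hdisj hl))
  obtain ⟨b', hb'sub, hb'fin, hcover'⟩ :=
    hLcomp.elim_finite_subcover_image (fun l _ => gap_isOpen) hcover
  apply (hb'fin.image (fun l => gap K l)).subset
  rintro γ ⟨l, hl, rfl⟩
  have h1 : l ∈ ⋃ i ∈ b', gap K i := hcover' hl
  simp only [mem_iUnion, exists_prop] at h1
  obtain ⟨i, hib', hil⟩ := h1
  have heq : gap K l = gap K i :=
    gap_eq_of_mem hKcl hKne (not_mem_K_of_mem_L hdisj (hb'sub hib'))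
      (not_mem_K_of_mem_L hdisj hl) hil
  exact ⟨i, hib', heq.symm⟩

lemma swallow_exists (hKcl : IsClosed K) (hKne : K.Nonempty) (hdisj : K ∩ L = ∅)
    (hfK : f '' K ⊆ K) (hfL : f '' L ⊆ L)
    {γ : Set S1} (hγ : γ ∈ SigmaL K L) : ∃ γ' ∈ SigmaL K L, γ' ⊆ f '' γ := by
  obtain ⟨l, hl, rfl⟩ := hγ
  have hfl : f l ∈ L := hfL ⟨l, hl, rfl⟩
  refine ⟨gap K (f l), SigmaL_gap_mem hfl, ?_⟩
  apply trick_open gap_preconn (f.isOpenMap _ gap_isOpen)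
  · refine ⟨f l, mem_gap_self hKcl hKne (not_mem_K_of_mem_L hdisj hfl), ?_⟩
    exact ⟨l, mem_gap_self hKcl hKne (not_mem_K_of_mem_L hdisj hl), rfl⟩
  · apply eq_empty_of_subset_empty
    rintro a ⟨ha1, ha2⟩
    rw [← f.image_frontier] at ha2
    obtain ⟨b, hb, rfl⟩ := ha2
    have hbK : f b ∈ K := hfK ⟨b, frontier_gap_subset_K hKcl hKne
      (not_mem_K_of_mem_L hdisj hl) hb, rfl⟩
    have := gap_inter_K hKcl hKne (not_mem_K_of_mem_L hdisj hfl)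
    exact (this ▸ (⟨ha1, hbK⟩ : f b ∈ gap K (f l) ∩ K) : f b ∈ (∅ : Set S1))

lemma swallow_source_unique (hKcl : IsClosed K) (hKne : K.Nonempty) (hdisj : K ∩ L = ∅)
    {γ₁ γ₂ γ' : Set S1} (h₁ : γ₁ ∈ SigmaL K L) (h₂ : γ₂ ∈ SigmaL K L) (h' : γ' ∈ SigmaL K L)
    (hs₁ : γ' ⊆ f '' γ₁) (hs₂ : γ' ⊆ f '' γ₂) : γ₁ = γ₂ := by
  by_contra hne
  have hd12 : γ₁ ∩ γ₂ = ∅ := by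
    by_contra h
    exact hne (SigmaL_eq_of_inter hKcl hKne hdisj h₁ h₂ (nonempty_iff_ne_empty.mpr h))
  have himg : f '' γ₁ ∩ f '' γ₂ = ∅ := by
    rw [← image_inter f.injective, hd12, image_empty]
  obtain ⟨u, hu, _⟩ := SigmaL_inter_L_nonempty hKcl hKne hdisj h'
  exact (himg ▸ (⟨hs₁ hu, hs₂ hu⟩ : u ∈ f '' γ₁ ∩ f '' γ₂) : u ∈ (∅ : Set S1))

/-- Main permutation lemma: every gap of `K` meeting `L` is "fed" by a unique gap, and is
the unique `SigmaL`-member swallowed by the image of that gap. -/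
lemma swallow_perm (hKcl : IsClosed K) (hKne : K.Nonempty) (hLcl : IsClosed L)
    (hdisj : K ∩ L = ∅) (hfK : f '' K ⊆ K) (hfL : f '' L ⊆ L) :
    ∀ γ' ∈ SigmaL K L, ∃ γ ∈ SigmaL K L, γ' ⊆ f '' γ ∧
      ∀ γ'' ∈ SigmaL K L, γ'' ⊆ f '' γ → γ'' = γ' := by
  haveI : Finite ↥(SigmaL K L) := (SigmaL_finite hKcl hKne hLcl hdisj).to_subtype
  have hch : ∀ γ : ↥(SigmaL K L), ∃ γ' : ↥(SigmaL K L), (γ' : Set S1) ⊆ f '' (γ : Set S1) := by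
    intro γ
    obtain ⟨γ', hγ', hsub⟩ := swallow_exists hKcl hKne hdisj hfK hfL γ.2
    exact ⟨⟨γ', hγ'⟩, hsub⟩
  choose ν hν using hch
  have hinj : Function.Injective ν := by
    intro γ₁ γ₂ h
    have h1 := hν γ₁
    have h2 := hν γ₂
    rw [h] at h1
    exact Subtype.ext (swallow_source_unique hKcl hKne hdisj γ₁.2 γ₂.2 (ν γ₂).2 h1 h2)
  have hsurj : Function.Surjective ν := Finite.injective_iff_surjective.mp hinj
  intro γ' hγ'
  obtain ⟨γ, hγeq⟩ := hsurj ⟨γ', hγ'⟩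
  have hsub : γ' ⊆ f '' (γ : Set S1) := by
    have := hν γ
    rwa [hγeq] at this
  refine ⟨γ, γ.2, hsub, ?_⟩
  intro γ'' hγ'' hsub''
  obtain ⟨γ₂, hγ₂eq⟩ := hsurj ⟨γ'', hγ''⟩
  have hsub2 : γ'' ⊆ f '' (γ₂ : Set S1) := by
    have := hν γ₂
    rwa [hγ₂eq] at this
  have hγ2γ : γ₂ = γ := by
    apply Subtype.ext
    exact swallow_source_unique hKcl hKne hdisj γ₂.2 γ.2 hγ'' hsub2 hsub''
  have h9 : (⟨γ'', hγ''⟩ : ↥(SigmaL K L)) = ⟨γ', hγ'⟩ := by rw [← hγ₂eq, hγ2γ, hγeq]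
  exact congrArg Subtype.val h9

end Perm

/-! ### Conjunct 1: the image of a gap arc is a gap arc -/

/-- Abstract "gap arc": endpoints in `K`, disjoint from `L`. -/
def PreGap (K L : Set S1) (I : Set S1) : Prop :=
  ∃ x ∈ K, ∃ y ∈ K, I = closedArc x y ∧ I ∩ L = ∅

section Conj1

variable {K L : Set S1} {f : HomS1}

lemma image_preGap_inter_L (hKcl : IsClosed K) (hKne : K.Nonempty) (hLcl : IsClosed L)
    (hdisj : K ∩ L = ∅) (hfK : f '' K ⊆ K) (hfL : f '' L ⊆ L)
    {I : Set S1} (hI : PreGap K L I) : (f '' I) ∩ L = ∅ := by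
  obtain ⟨x, hx, y, hy, hIeq, hIL⟩ := hI
  by_contra hcon
  obtain ⟨w, hwf, hwL⟩ := nonempty_iff_ne_empty.mpr hcon
  have hwK : w ∉ K := not_mem_K_of_mem_L hdisj hwL
  have hγt : gap K w ∈ SigmaL K L := SigmaL_gap_mem hwL
  -- frontier of f '' I is inside K
  have hfrI : frontier I ⊆ K := by
    rw [hIeq]
    intro u hu
    rcases frontier_closedArc_subset x y hu with h | h
    · rw [h]; exact hx
    · rw [mem_singleton_iff] at h; rw [h]; exact hy
  have hfrC : frontier (f '' I) ⊆ K := by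
    rw [← f.image_frontier]
    rintro u ⟨b, hb, rfl⟩
    exact hfK ⟨b, hfrI hb, rfl⟩
  have hCcl : IsClosed (f '' I) := by
    rw [hIeq]
    exact ((closedArc_isCompact x y).image f.continuous).isClosed
  -- step 1 : gap K w ⊆ f '' I
  have hstep1 : gap K w ⊆ f '' I := by
    apply trick_closed gap_preconn hCcl ⟨w, mem_gap_self hKcl hKne hwK, hwf⟩
    apply eq_empty_of_subset_empty
    rintro a ⟨ha1, ha2⟩
    have haK : a ∈ K := hfrC ha2
    have := gap_inter_K hKcl hKne hwK
    exact (this ▸ (⟨ha1, haK⟩ : a ∈ gap K w ∩ K) : a ∈ (∅ : Set S1))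
  -- step 2 : unique feeding gap γs
  obtain ⟨γs, hgsS, hgsub, _⟩ :=
    swallow_perm hKcl hKne hLcl hdisj hfK hfL (gap K w) hγt
  -- step 3 : I ∩ γs ≠ ∅
  have hIγs : (I ∩ γs).Nonempty := by
    have h1 : w ∈ f '' I ∩ f '' γs := ⟨hwf, hgsub (mem_gap_self hKcl hKne hwK)⟩
    rw [← image_inter f.injective] at h1
    obtain ⟨u, hu, _⟩ := h1
    exact ⟨u, hu⟩
  -- step 4 : γs ⊆ I
  have hstep4 : γs ⊆ I := by
    apply trick_closed (SigmaL_preconn hgsS) (hIeq ▸ closedArc_isClosed x y)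
      ⟨hIγs.choose, (hIγs.choose_spec).2, (hIγs.choose_spec).1⟩
    apply eq_empty_of_subset_empty
    rintro a ⟨ha1, ha2⟩
    have haK : a ∈ K := hfrI ha2
    have := SigmaL_inter_K hKcl hKne hdisj hgsS
    exact (this ▸ (⟨ha1, haK⟩ : a ∈ γs ∩ K) : a ∈ (∅ : Set S1))
  -- step 5 : contradiction with I ∩ L = ∅
  obtain ⟨u, huγ, huL⟩ := SigmaL_inter_L_nonempty hKcl hKne hdisj hgsS
  exact (hIL ▸ (⟨hstep4 huγ, huL⟩ : u ∈ I ∩ L) : u ∈ (∅ : Set S1))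

lemma continuousAt_argSub {v u : S1} (h : u ≠ v) :
    ContinuousAt (fun w : S1 => argS1 (w - v)) u := by
  have h1 : ContinuousAt (fun w : S1 => w - v) u :=
    (continuous_id.sub continuous_const).continuousAt
  have hne : u - v ≠ (((0:ℝ)) : S1) := by
    have : (((0:ℝ)) : S1) = 0 := by norm_cast
    rw [this]
    exact sub_ne_zero.mpr h
  have h2 : ContinuousAt (AddCircle.equivIco 1 0) (u - v) :=
    AddCircle.continuousAt_equivIco 1 0 hne
  have h3 : ContinuousAt (fun q : Ico (0:ℝ) (0+1) => (q : ℝ)) (AddCircle.equivIco 1 0 (u - v)) :=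
    continuousAt_subtype_val
  show ContinuousAt ((fun q : Ico (0:ℝ) (0+1) => (q:ℝ)) ∘ (AddCircle.equivIco 1 0) ∘
    (fun w : S1 => w - v)) u
  exact ContinuousAt.comp (f := fun w : S1 => w - v) (x := u) (h3.comp h2) h1

lemma image_closedArc (f : HomS1) {x y : S1} (hxy : x ≠ y) :
    ∃ a b : S1, f '' closedArc x y = closedArc a b ∧
      ((a = f x ∧ b = f y) ∨ (a = f y ∧ b = f x)) := by
  set C := f '' closedArc x y with hCdef
  have hCcomp : IsCompact C := (closedArc_isCompact x y).image f.continuous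
  have hCpre : IsPreconnected C := (closedArc_preconn x y).image _ f.continuous.continuousOn
  have hCne : C.Nonempty := ⟨f x, ⟨x, left_mem_closedArc x y, rfl⟩⟩
  have hCnuniv : C ≠ univ := by
    intro h
    obtain ⟨v, hv⟩ := (ne_univ_iff_exists_notMem _).mp (closedArc_ne_univ x y)
    have : f v ∈ C := by rw [h]; exact mem_univ _
    obtain ⟨u, hu, huv⟩ := this
    have hueq : u = v := f.injective huv
    rw [hueq] at hu
    exact hv hu
  obtain ⟨v, hv⟩ := (ne_univ_iff_exists_notMem _).mp hCnuniv
  set T := (fun u => argS1 (u - v)) '' C with hTdef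
  have hcont : ContinuousOn (fun u => argS1 (u - v)) C := by
    intro u hu
    refine (continuousAt_argSub (fun h : u = v => ?_)).continuousWithinAt
    rw [h] at hu
    exact hv hu
  have hTcomp : IsCompact T := hCcomp.image_of_continuousOn hcont
  have hTpre : IsPreconnected T := hCpre.image _ hcont
  have hTne : T.Nonempty := hCne.image _
  have hIcc : T = Icc (sInf T) (sSup T) := eq_Icc_of_connected_compact ⟨hTne, hTpre⟩ hTcomp
  set a' := sInf T with ha'def
  set b' := sSup T with hb'def
  have hab : a' ≤ b' := csInf_le_csSup hTne hTcomp.bddBelow hTcomp.bddAbove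
  have ha'T : a' ∈ T := hTcomp.isClosed.csInf_mem hTne hTcomp.bddBelow
  have hb'T : b' ∈ T := hTcomp.isClosed.csSup_mem hTne hTcomp.bddAbove
  have ha'pos : 0 < a' := by
    obtain ⟨u, hu, heq⟩ := ha'T
    rcases lt_or_eq_of_le (argS1_nonneg (u - v)) with h | h
    · rw [← heq]; exact h
    · exfalso
      apply hv
      have : u = v := by rw [← sub_eq_zero]; exact argS1_eq_zero_iff.mp h.symm
      exact this ▸ hu
  have hb'lt : b' < 1 := by
    obtain ⟨u, _, heq⟩ := hb'T
    rw [← heq]; exact argS1_lt_one _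
  have hC : C = e v '' T := by
    ext u
    constructor
    · intro hu
      exact ⟨argS1 (u - v), ⟨u, hu, rfl⟩, e_arg v u⟩
    · rintro ⟨t, ⟨u', hu', rfl⟩, rfl⟩
      rw [e_arg]; exact hu'
  obtain ⟨harc, _, _⟩ := closedArc_of_chart (z := v) ha'pos hab hb'lt
  have hCarc : C = closedArc (e v a') (e v b') := by
    rw [harc, hC, hIcc]
  -- endpoints
  have hfr1 : frontier (closedArc x y) = {x, y} := by
    apply Subset.antisymm (frontier_closedArc_subset x y)
    intro u hu
    rcases hu with rfl | hu
    · exact (mem_frontier_closedArc hxy).1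
    · rw [mem_singleton_iff] at hu; rw [hu]; exact (mem_frontier_closedArc hxy).2
  have hfrC : frontier C = {f x, f y} := by
    rw [hCdef, ← f.image_frontier, hfr1, image_pair]
  have hfrC2 : frontier C ⊆ {e v a', e v b'} := by
    rw [hCarc]; exact frontier_closedArc_subset _ _
  have hfx : f x ∈ ({e v a', e v b'} : Set S1) := hfrC2 (hfrC ▸ mem_insert _ _)
  have hfy : f y ∈ ({e v a', e v b'} : Set S1) := hfrC2 (hfrC ▸ mem_insert_of_mem _ rfl)
  have hfxy : f x ≠ f y := fun h => hxy (f.injective h)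
  refine ⟨e v a', e v b', hCarc ▸ rfl, ?_⟩
  rcases hfx with h1 | h1 <;> rcases hfy with h2 | h2
  · exact absurd (h1.trans h2.symm) hfxy
  · rw [mem_singleton_iff] at h2
    exact Or.inl ⟨h1.symm, h2.symm⟩
  · rw [mem_singleton_iff] at h1
    exact Or.inr ⟨h2.symm, h1.symm⟩
  · rw [mem_singleton_iff] at h1 h2
    exact absurd (h1.trans h2.symm) hfxy

lemma image_preGap (hKcl : IsClosed K) (hKne : K.Nonempty) (hLcl : IsClosed L)
    (hdisj : K ∩ L = ∅) (hfK : f '' K ⊆ K) (hfL : f '' L ⊆ L)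
    {I : Set S1} (hI : PreGap K L I) : PreGap K L (f '' I) := by
  have hinterL : (f '' I) ∩ L = ∅ :=
    image_preGap_inter_L hKcl hKne hLcl hdisj hfK hfL hI
  obtain ⟨x, hx, y, hy, hIeq, hIL⟩ := hI
  by_cases hxy : x = y
  · subst hxy
    have hfx : f x ∈ K := hfK ⟨x, hx, rfl⟩
    have himg : f '' I = {f x} := by rw [hIeq, closedArc_self, image_singleton]
    exact ⟨f x, hfx, f x, hfx, by rw [himg, closedArc_self], hinterL⟩
  · obtain ⟨a, b, harc, hends⟩ := image_closedArc f hxy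
    rw [hIeq]
    refine ⟨a, ?_, b, ?_, harc, by rw [← hIeq]; exact hinterL⟩
    · rcases hends with ⟨h1, _⟩ | ⟨h1, _⟩
      · rw [h1]; exact hfK ⟨x, hx, rfl⟩
      · rw [h1]; exact hfK ⟨y, hy, rfl⟩
    · rcases hends with ⟨_, h2⟩ | ⟨_, h2⟩
      · rw [h2]; exact hfK ⟨y, hy, rfl⟩
      · rw [h2]; exact hfK ⟨x, hx, rfl⟩

end Conj1

/-! ### Maximal gap arcs -/

/-- `I` is a maximal gap arc. -/
def MaxPreGap (K L : Set S1) (I : Set S1) : Prop :=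
  PreGap K L I ∧ ∀ J, PreGap K L J → I ⊆ J → J = I

section MaxArcs

variable {K L : Set S1} {z₀ : S1}

lemma arg_mem_TT {W : Set S1} {w : S1} (hw : w ∈ W) : argS1 (w - z₀) ∈ TT W z₀ :=
  ⟨⟨argS1_nonneg _, le_of_lt (argS1_lt_one _)⟩, by rw [e_arg]; exact hw⟩

lemma TT_disj (hdisj : K ∩ L = ∅) : TT K z₀ ∩ TT L z₀ = ∅ := by
  apply eq_empty_of_subset_empty
  rintro t ⟨h1, h2⟩
  exact (hdisj ▸ (⟨h1.2, h2.2⟩ : e z₀ t ∈ K ∩ L) : e z₀ t ∈ (∅ : Set S1))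

lemma exists_max_preGap (hKcl : IsClosed K) (hKne : K.Nonempty) (hLcl : IsClosed L)
    (hz₀L : z₀ ∈ L) (hdisj : K ∩ L = ∅) {I : Set S1} (hI : PreGap K L I) :
    ∃ J, MaxPreGap K L J ∧ I ⊆ J := by
  obtain ⟨x, hx, y, hy, hIeq, hIL⟩ := hI
  have hz₀K : z₀ ∉ K := fun h =>
    (hdisj ▸ (⟨h, hz₀L⟩ : z₀ ∈ K ∩ L) : z₀ ∈ (∅ : Set S1))
  have hz₀I : z₀ ∉ I := fun h =>
    (hIL ▸ (⟨h, hz₀L⟩ : z₀ ∈ I ∩ L) : z₀ ∈ (∅ : Set S1))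
  obtain ⟨hp0, hpq, hq1, hmemI⟩ := chart_closedArc (hIeq ▸ hz₀I)
  set p := argS1 (x - z₀) with hpdef
  set q := argS1 (y - z₀) with hqdef
  have memI : ∀ w, w ∈ I ↔ argS1 (w - z₀) ∈ Icc p q := by
    intro w; rw [hIeq]; exact hmemI w
  have hTTKL : TT K z₀ ∩ TT L z₀ = ∅ := TT_disj hdisj
  -- extend forwards
  set A := {t | t ∈ TT K z₀ ∧ q ≤ t ∧ Icc q t ∩ TT L z₀ = ∅} with hAdef
  have hqTT : q ∈ TT K z₀ := hqdef ▸ arg_mem_TT hy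
  have hqA : q ∈ A := by
    refine ⟨hqTT, le_refl q, ?_⟩
    apply eq_empty_of_subset_empty
    rintro t ⟨ht1, ht2⟩
    rw [Icc_self, mem_singleton_iff] at ht1
    exact (hTTKL ▸ (⟨ht1 ▸ hqTT, ht2⟩ : t ∈ TT K z₀ ∩ TT L z₀) : t ∈ (∅ : Set ℝ))
  have hAne : A.Nonempty := ⟨q, hqA⟩
  have hAbdd : BddAbove A := ⟨1, fun t ht => ht.1.1.2⟩
  set Q := sSup A with hQdef
  have hQTT : Q ∈ TT K z₀ := by
    have h1 : Q ∈ closure A := csSup_mem_closure hAne hAbdd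
    have h2 : closure A ⊆ TT K z₀ :=
      (TT_isClosed hKcl).closure_subset_iff.mpr (fun t ht => ht.1) |>.trans (le_refl _)
    exact h2 h1
  have hqQ : q ≤ Q := le_csSup hAbdd hqA
  have hQL : Icc q Q ∩ TT L z₀ = ∅ := by
    apply eq_empty_of_subset_empty
    rintro t ⟨⟨ht1, ht2⟩, ht3⟩
    rcases lt_or_eq_of_le ht2 with h | h
    · obtain ⟨s, hsA, hts⟩ := exists_lt_of_lt_csSup hAne h
      exact (hsA.2.2 ▸ (⟨⟨ht1, le_of_lt hts⟩, ht3⟩ : t ∈ Icc q s ∩ TT L z₀) :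
        t ∈ (∅ : Set ℝ))
    · rw [h] at ht3
      exact (hTTKL ▸ (⟨hQTT, ht3⟩ : Q ∈ TT K z₀ ∩ TT L z₀) : Q ∈ (∅ : Set ℝ))
  -- extend backwards
  set B := {t | t ∈ TT K z₀ ∧ t ≤ p ∧ Icc t p ∩ TT L z₀ = ∅} with hBdef
  have hpTT : p ∈ TT K z₀ := hpdef ▸ arg_mem_TT hx
  have hpB : p ∈ B := by
    refine ⟨hpTT, le_refl p, ?_⟩
    apply eq_empty_of_subset_empty
    rintro t ⟨ht1, ht2⟩
    rw [Icc_self, mem_singleton_iff] at ht1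
    exact (hTTKL ▸ (⟨ht1 ▸ hpTT, ht2⟩ : t ∈ TT K z₀ ∩ TT L z₀) : t ∈ (∅ : Set ℝ))
  have hBne : B.Nonempty := ⟨p, hpB⟩
  have hBbdd : BddBelow B := ⟨0, fun t ht => ht.1.1.1⟩
  set P := sInf B with hPdef
  have hPTT : P ∈ TT K z₀ := by
    have h1 : P ∈ closure B := csInf_mem_closure hBne hBbdd
    exact ((TT_isClosed hKcl).closure_subset_iff.mpr (fun t ht => ht.1)) h1
  have hPp : P ≤ p := csInf_le hBbdd hpB
  have hPL : Icc P p ∩ TT L z₀ = ∅ := by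
    apply eq_empty_of_subset_empty
    rintro t ⟨⟨ht1, ht2⟩, ht3⟩
    rcases lt_or_eq_of_le ht1 with h | h
    · obtain ⟨s, hsB, hts⟩ := exists_lt_of_csInf_lt hBne h
      exact (hsB.2.2 ▸ (⟨⟨le_of_lt hts, ht2⟩, ht3⟩ : t ∈ Icc s p ∩ TT L z₀) :
        t ∈ (∅ : Set ℝ))
    · rw [← h] at ht3
      exact (hTTKL ▸ (⟨hPTT, ht3⟩ : P ∈ TT K z₀ ∩ TT L z₀) : P ∈ (∅ : Set ℝ))
  -- the maximal arc
  have hP0 : 0 < P := (TT_subset hz₀K hPTT).1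
  have hQ1 : Q < 1 := (TT_subset hz₀K hQTT).2
  have hPQ : P ≤ Q := le_trans hPp (le_trans hpq hqQ)
  obtain ⟨hJim, hJmem, hJz₀⟩ := closedArc_of_chart (z := z₀) hP0 hPQ hQ1
  set J := closedArc (e z₀ P) (e z₀ Q) with hJdef
  have hJL : J ∩ L = ∅ := by
    apply eq_empty_of_subset_empty
    rintro w ⟨hw1, hw2⟩
    have ht : argS1 (w - z₀) ∈ Icc P Q := (hJmem w).mp hw1
    have htL : argS1 (w - z₀) ∈ TT L z₀ := arg_mem_TT hw2
    rcases le_total (argS1 (w - z₀)) p with h | h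
    · exact (hPL ▸ (⟨⟨ht.1, h⟩, htL⟩ : argS1 (w - z₀) ∈ Icc P p ∩ TT L z₀) :
        argS1 (w - z₀) ∈ (∅ : Set ℝ))
    · rcases le_total (argS1 (w - z₀)) q with h2 | h2
      · have : w ∈ I := (memI w).mpr ⟨h, h2⟩
        exact (hIL ▸ (⟨this, hw2⟩ : w ∈ I ∩ L) : w ∈ (∅ : Set S1))
      · exact (hQL ▸ (⟨⟨h2, ht.2⟩, htL⟩ : argS1 (w - z₀) ∈ Icc q Q ∩ TT L z₀) :
          argS1 (w - z₀) ∈ (∅ : Set ℝ))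
  have hJpre : PreGap K L J := ⟨e z₀ P, hPTT.2, e z₀ Q, hQTT.2, rfl, hJL⟩
  have hIJ : I ⊆ J := by
    intro w hw
    have := (memI w).mp hw
    exact (hJmem w).mpr ⟨le_trans hPp this.1, le_trans this.2 hqQ⟩
  refine ⟨J, ⟨hJpre, ?_⟩, hIJ⟩
  -- maximality
  rintro J' ⟨u, hu, v, hv, hJ'eq, hJ'L⟩ hJJ'
  have hz₀J' : z₀ ∉ J' := fun h =>
    (hJ'L ▸ (⟨h, hz₀L⟩ : z₀ ∈ J' ∩ L) : z₀ ∈ (∅ : Set S1))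
  obtain ⟨hpu0, hpuqv, hqv1, hmemJ'⟩ := chart_closedArc (hJ'eq ▸ hz₀J')
  set pu := argS1 (u - z₀) with hpudef
  set qv := argS1 (v - z₀) with hqvdef
  have memJ' : ∀ w, w ∈ J' ↔ argS1 (w - z₀) ∈ Icc pu qv := by
    intro w; rw [hJ'eq]; exact hmemJ' w
  have hPmem : P ∈ Icc pu qv := by
    have hP1 : argS1 (e z₀ P - z₀) = P := Phi_e ⟨le_of_lt hP0, lt_of_le_of_lt hPQ hQ1⟩
    have h1 : e z₀ P ∈ J' := hJJ' ((hJmem (e z₀ P)).mpr (by rw [hP1]; exact ⟨le_refl P, hPQ⟩))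
    have h2 := (memJ' _).mp h1
    rwa [hP1] at h2
  have hQmem : Q ∈ Icc pu qv := by
    have hQ2 : argS1 (e z₀ Q - z₀) = Q := Phi_e ⟨le_of_lt (lt_of_lt_of_le hP0 hPQ), hQ1⟩
    have h1 : e z₀ Q ∈ J' := hJJ' ((hJmem (e z₀ Q)).mpr (by rw [hQ2]; exact ⟨hPQ, le_refl Q⟩))
    have h2 := (memJ' _).mp h1
    rwa [hQ2] at h2
  have hqvA : qv ∈ A := by
    refine ⟨hqvdef ▸ arg_mem_TT hv, le_trans hqQ hQmem.2, ?_⟩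
    apply eq_empty_of_subset_empty
    rintro t ⟨⟨ht1, ht2⟩, ht3⟩
    have htJ' : e z₀ t ∈ J' := by
      rw [memJ' _, Phi_e ⟨le_trans (le_of_lt hp0) (le_trans hpq ht1), lt_of_le_of_lt ht2 hqv1⟩]
      exact ⟨le_trans hPmem.1 (le_trans hPp (le_trans hpq ht1)), ht2⟩
    exact (hJ'L ▸ (⟨htJ', ht3.2⟩ : e z₀ t ∈ J' ∩ L) : e z₀ t ∈ (∅ : Set S1))
  have hpuB : pu ∈ B := by
    refine ⟨hpudef ▸ arg_mem_TT hu, le_trans hPmem.1 hPp, ?_⟩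
    apply eq_empty_of_subset_empty
    rintro t ⟨⟨ht1, ht2⟩, ht3⟩
    have htJ' : e z₀ t ∈ J' := by
      rw [memJ' _, Phi_e ⟨le_trans (le_of_lt hpu0) ht1, lt_of_le_of_lt (le_trans ht2 hpq) hq1⟩]
      exact ⟨ht1, le_trans ht2 (le_trans hpq (le_trans hqQ hQmem.2))⟩
    exact (hJ'L ▸ (⟨htJ', ht3.2⟩ : e z₀ t ∈ J' ∩ L) : e z₀ t ∈ (∅ : Set S1))
  have hqvQ : qv = Q := le_antisymm (le_csSup hAbdd hqvA) hQmem.2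
  have hpuP : pu = P := le_antisymm hPmem.1 (csInf_le hBbdd hpuB)
  ext w
  rw [memJ' w, hJmem w, hqvQ, hpuP]

lemma maxPreGap_eq_of_inter (hLcl : IsClosed L) (hz₀L : z₀ ∈ L)
    {I₁ I₂ : Set S1} (h₁ : MaxPreGap K L I₁) (h₂ : MaxPreGap K L I₂)
    (hne : (I₁ ∩ I₂).Nonempty) : I₁ = I₂ := by
  obtain ⟨⟨x₁, hx₁, y₁, hy₁, hI₁eq, hI₁L⟩, hmax₁⟩ := h₁
  obtain ⟨⟨x₂, hx₂, y₂, hy₂, hI₂eq, hI₂L⟩, hmax₂⟩ := h₂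
  have hz₀I₁ : z₀ ∉ I₁ := fun h =>
    (hI₁L ▸ (⟨h, hz₀L⟩ : z₀ ∈ I₁ ∩ L) : z₀ ∈ (∅ : Set S1))
  have hz₀I₂ : z₀ ∉ I₂ := fun h =>
    (hI₂L ▸ (⟨h, hz₀L⟩ : z₀ ∈ I₂ ∩ L) : z₀ ∈ (∅ : Set S1))
  obtain ⟨hp₁0, hpq₁, hq₁1, hmem₁⟩ := chart_closedArc (hI₁eq ▸ hz₀I₁)
  obtain ⟨hp₂0, hpq₂, hq₂1, hmem₂⟩ := chart_closedArc (hI₂eq ▸ hz₀I₂)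
  set p₁ := argS1 (x₁ - z₀)
  set q₁ := argS1 (y₁ - z₀)
  set p₂ := argS1 (x₂ - z₀)
  set q₂ := argS1 (y₂ - z₀)
  have mem₁ : ∀ w, w ∈ I₁ ↔ argS1 (w - z₀) ∈ Icc p₁ q₁ := by
    intro w; rw [hI₁eq]; exact hmem₁ w
  have mem₂ : ∀ w, w ∈ I₂ ↔ argS1 (w - z₀) ∈ Icc p₂ q₂ := by
    intro w; rw [hI₂eq]; exact hmem₂ w
  obtain ⟨w, hw₁, hw₂⟩ := hne
  have ht₁ := (mem₁ w).mp hw₁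
  have ht₂ := (mem₂ w).mp hw₂
  set P := min p₁ p₂ with hPdef
  set Q := max q₁ q₂ with hQdef
  have hP0 : 0 < P := lt_min hp₁0 hp₂0
  have hQ1 : Q < 1 := max_lt hq₁1 hq₂1
  have hPQ : P ≤ Q := le_trans (min_le_left _ _) (le_trans hpq₁ (le_max_left _ _))
  obtain ⟨hJim, hJmem, hJz₀⟩ := closedArc_of_chart (z := z₀) hP0 hPQ hQ1
  set J := closedArc (e z₀ P) (e z₀ Q) with hJdef
  have hsplit : ∀ s, s ∈ Icc P Q → s ∈ Icc p₁ q₁ ∨ s ∈ Icc p₂ q₂ := by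
    rintro s ⟨hs1, hs2⟩
    rcases le_total s (argS1 (w - z₀)) with h | h
    · rcases le_total p₁ p₂ with hp | hp
      · exact Or.inl ⟨le_trans (le_min (le_refl p₁) hp) hs1, le_trans h ht₁.2⟩
      · exact Or.inr ⟨le_trans (le_min hp (le_refl p₂)) hs1, le_trans h ht₂.2⟩
    · rcases le_total q₁ q₂ with hq | hq
      · exact Or.inr ⟨le_trans ht₂.1 h, le_trans hs2 (max_le hq (le_refl q₂))⟩
      · exact Or.inl ⟨le_trans ht₁.1 h, le_trans hs2 (max_le (le_refl q₁) hq)⟩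
  have hJL : J ∩ L = ∅ := by
    apply eq_empty_of_subset_empty
    rintro w' ⟨hw'1, hw'2⟩
    have hs := (hJmem w').mp hw'1
    rcases hsplit _ hs with h | h
    · exact (hI₁L ▸ (⟨(mem₁ w').mpr h, hw'2⟩ : w' ∈ I₁ ∩ L) : w' ∈ (∅ : Set S1))
    · exact (hI₂L ▸ (⟨(mem₂ w').mpr h, hw'2⟩ : w' ∈ I₂ ∩ L) : w' ∈ (∅ : Set S1))
  have hJpre : PreGap K L J := by
    refine ⟨e z₀ P, ?_, e z₀ Q, ?_, rfl, hJL⟩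
    · rcases min_cases p₁ p₂ with ⟨hmin, _⟩ | ⟨hmin, _⟩
      · rw [hPdef, hmin, e_arg]; exact hx₁
      · rw [hPdef, hmin, e_arg]; exact hx₂
    · rcases max_cases q₁ q₂ with ⟨hmax, _⟩ | ⟨hmax, _⟩
      · rw [hQdef, hmax, e_arg]; exact hy₁
      · rw [hQdef, hmax, e_arg]; exact hy₂
  have hI₁J : I₁ ⊆ J := by
    intro w' hw'
    have := (mem₁ w').mp hw'
    exact (hJmem w').mpr ⟨le_trans (min_le_left _ _) this.1, le_trans this.2 (le_max_left _ _)⟩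
  have hI₂J : I₂ ⊆ J := by
    intro w' hw'
    have := (mem₂ w').mp hw'
    exact (hJmem w').mpr ⟨le_trans (min_le_right _ _) this.1, le_trans this.2 (le_max_right _ _)⟩
  rw [← hmax₁ J hJpre hI₁J, ← hmax₂ J hJpre hI₂J]

lemma singleton_preGap (hdisj : K ∩ L = ∅) {x : S1} (hx : x ∈ K) :
    PreGap K L {x} := by
  refine ⟨x, hx, x, hx, (closedArc_self x).symm, ?_⟩
  apply eq_empty_of_subset_empty
  rintro a ⟨ha1, ha2⟩
  rw [mem_singleton_iff] at ha1
  exact (hdisj ▸ (⟨ha1 ▸ hx, ha2⟩ : a ∈ K ∩ L) : a ∈ (∅ : Set S1))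

lemma exists_max_preGap_mem (hKcl : IsClosed K) (hKne : K.Nonempty) (hLcl : IsClosed L)
    (hz₀L : z₀ ∈ L) (hdisj : K ∩ L = ∅) {x : S1} (hx : x ∈ K) :
    ∃ J, MaxPreGap K L J ∧ x ∈ J := by
  obtain ⟨J, hJ, hsub⟩ :=
    exists_max_preGap hKcl hKne hLcl hz₀L hdisj (singleton_preGap hdisj hx)
  exact ⟨J, hJ, hsub rfl⟩

end MaxArcs

/-! ### No points of `K` immediately beyond a maximal gap arc -/

section Beyond

variable {K L : Set S1} {z₀ : S1}

lemma no_K_after (hKcl : IsClosed K) (hKne : K.Nonempty) (hLcl : IsClosed L) (hz₀L : z₀ ∈ L)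
    (hdisj : K ∩ L = ∅) {I : Set S1} {x y : S1} (hx : x ∈ K) (hy : y ∈ K)
    (hIeq : I = closedArc x y) (hIL : I ∩ L = ∅)
    (hImax : ∀ J, PreGap K L J → I ⊆ J → J = I) :
    ∃ ε > 0, (argS1 (y - z₀)) + ε < 1 ∧
      ∀ t, argS1 (y - z₀) < t → t ≤ argS1 (y - z₀) + ε → t ∉ TT K z₀ := by
  set p := argS1 (x - z₀) with hpdef
  set q := argS1 (y - z₀) with hqdef
  have hz₀I : z₀ ∉ I := fun h =>
    (hIL ▸ (⟨h, hz₀L⟩ : z₀ ∈ I ∩ L) : z₀ ∈ (∅ : Set S1))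
  obtain ⟨hp0, hpq, hq1, hmemI⟩ := chart_closedArc (hIeq ▸ hz₀I)
  have memI : ∀ w, w ∈ I ↔ argS1 (w - z₀) ∈ Icc p q := by
    intro w; rw [hIeq]; exact hmemI w
  have hext : ∀ t, q < t → t < 1 → t ∈ TT K z₀ → (Ioc q t ∩ TT L z₀).Nonempty := by
    intro t hqt ht1 htK
    by_contra hempty
    rw [not_nonempty_iff_eq_empty] at hempty
    obtain ⟨hJim, hJmem, hJz₀⟩ :=
      closedArc_of_chart (z := z₀) hp0 (le_trans hpq (le_of_lt hqt)) ht1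
    set J := closedArc (e z₀ p) (e z₀ t) with hJdef
    have hJL : J ∩ L = ∅ := by
      apply eq_empty_of_subset_empty
      rintro w ⟨hw1, hw2⟩
      have hs := (hJmem w).mp hw1
      have hsL : argS1 (w - z₀) ∈ TT L z₀ := arg_mem_TT hw2
      rcases le_or_gt (argS1 (w - z₀)) q with h | h
      · exact (hIL ▸ (⟨(memI w).mpr ⟨hs.1, h⟩, hw2⟩ : w ∈ I ∩ L) : w ∈ (∅ : Set S1))
      · exact (hempty ▸ (⟨⟨h, hs.2⟩, hsL⟩ : argS1 (w - z₀) ∈ Ioc q t ∩ TT L z₀) :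
          argS1 (w - z₀) ∈ (∅ : Set ℝ))
    have hJpre : PreGap K L J :=
      ⟨e z₀ p, by rw [hpdef, e_arg]; exact hx, e z₀ t, htK.2, rfl, hJL⟩
    have hIJ : I ⊆ J := fun w hw =>
      (hJmem w).mpr ⟨((memI w).mp hw).1, le_trans ((memI w).mp hw).2 (le_of_lt hqt)⟩
    have hJI : J = I := hImax J hJpre hIJ
    have hmem : e z₀ t ∈ I := hJI ▸ right_mem_closedArc _ _
    have ht' := (memI _).mp hmem
    rw [Phi_e ⟨le_of_lt (lt_of_le_of_lt (le_trans (le_of_lt hp0) hpq) hqt), ht1⟩] at ht'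
    linarith [ht'.2]
  by_cases hS : (TT K z₀ ∩ Ioi q).Nonempty
  · have hbddb : BddBelow (TT K z₀ ∩ Ioi q) := ⟨q, fun s hs => le_of_lt hs.2⟩
    set r := sInf (TT K z₀ ∩ Ioi q) with hrdef
    have hqr : q ≤ r := le_csInf hS (fun s hs => le_of_lt hs.2)
    rcases lt_or_eq_of_le hqr with hlt | heq
    · refine ⟨min ((r - q)/2) ((1 - q)/2), lt_min (by linarith) (by linarith), ?_, ?_⟩
      · have := min_le_right ((r - q)/2) ((1 - q)/2); linarith
      · intro t hqt htle htK
        have h1 : r ≤ t := csInf_le hbddb ⟨htK, hqt⟩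
        have h2 := min_le_left ((r - q)/2) ((1 - q)/2)
        linarith
    · exfalso
      have hq_clos : q ∈ closure (TT L z₀) := by
        rw [Metric.mem_closure_iff]
        intro ε hε
        set δ := min (ε/2) ((1 - q)/2) with hδdef
        have hδ0 : 0 < δ := lt_min (by linarith) (by linarith)
        have hδa : δ ≤ ε/2 := min_le_left _ _
        have hδb : δ ≤ (1 - q)/2 := min_le_right _ _
        obtain ⟨t, htmem, htlt⟩ := exists_lt_of_csInf_lt hS
          (show sInf (TT K z₀ ∩ Ioi q) < q + δ by rw [← hrdef, ← heq]; linarith)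
        obtain ⟨l, ⟨hl1, hl2⟩, hlL⟩ := hext t htmem.2 (by linarith) htmem.1
        refine ⟨l, hlL, ?_⟩
        rw [Real.dist_eq, abs_sub_comm, abs_of_nonneg (by linarith : (0:ℝ) ≤ l - q)]
        linarith
      have hqL : q ∈ TT L z₀ := by
        rw [← (TT_isClosed hLcl).closure_eq]; exact hq_clos
      have hyL : y ∈ L := by
        have := hqL.2
        rwa [hqdef, e_arg] at this
      exact (hdisj ▸ (⟨hy, hyL⟩ : y ∈ K ∩ L) : y ∈ (∅ : Set S1))
  · rw [not_nonempty_iff_eq_empty] at hS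
    refine ⟨(1 - q)/2, by linarith, by linarith, ?_⟩
    intro t hqt _ htK
    exact (hS ▸ (⟨htK, hqt⟩ : t ∈ TT K z₀ ∩ Ioi q) : t ∈ (∅ : Set ℝ))

lemma no_K_before (hKcl : IsClosed K) (hKne : K.Nonempty) (hLcl : IsClosed L) (hz₀L : z₀ ∈ L)
    (hdisj : K ∩ L = ∅) {I : Set S1} {x y : S1} (hx : x ∈ K) (hy : y ∈ K)
    (hIeq : I = closedArc x y) (hIL : I ∩ L = ∅)
    (hImax : ∀ J, PreGap K L J → I ⊆ J → J = I) :
    ∃ ε > 0, 0 < (argS1 (x - z₀)) - ε ∧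
      ∀ t, argS1 (x - z₀) - ε ≤ t → t < argS1 (x - z₀) → t ∉ TT K z₀ := by
  set p := argS1 (x - z₀) with hpdef
  set q := argS1 (y - z₀) with hqdef
  have hz₀I : z₀ ∉ I := fun h =>
    (hIL ▸ (⟨h, hz₀L⟩ : z₀ ∈ I ∩ L) : z₀ ∈ (∅ : Set S1))
  obtain ⟨hp0, hpq, hq1, hmemI⟩ := chart_closedArc (hIeq ▸ hz₀I)
  have memI : ∀ w, w ∈ I ↔ argS1 (w - z₀) ∈ Icc p q := by
    intro w; rw [hIeq]; exact hmemI w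
  have hext : ∀ t, 0 < t → t < p → t ∈ TT K z₀ → (Ico t p ∩ TT L z₀).Nonempty := by
    intro t ht0 htp htK
    by_contra hempty
    rw [not_nonempty_iff_eq_empty] at hempty
    obtain ⟨hJim, hJmem, hJz₀⟩ :=
      closedArc_of_chart (z := z₀) ht0 (le_trans (le_of_lt htp) hpq) hq1
    set J := closedArc (e z₀ t) (e z₀ q) with hJdef
    have hJL : J ∩ L = ∅ := by
      apply eq_empty_of_subset_empty
      rintro w ⟨hw1, hw2⟩
      have hs := (hJmem w).mp hw1
      have hsL : argS1 (w - z₀) ∈ TT L z₀ := arg_mem_TT hw2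
      rcases le_or_gt p (argS1 (w - z₀)) with h | h
      · exact (hIL ▸ (⟨(memI w).mpr ⟨h, hs.2⟩, hw2⟩ : w ∈ I ∩ L) : w ∈ (∅ : Set S1))
      · exact (hempty ▸ (⟨⟨hs.1, h⟩, hsL⟩ : argS1 (w - z₀) ∈ Ico t p ∩ TT L z₀) :
          argS1 (w - z₀) ∈ (∅ : Set ℝ))
    have hJpre : PreGap K L J :=
      ⟨e z₀ t, htK.2, e z₀ q, by rw [hqdef, e_arg]; exact hy, rfl, hJL⟩
    have hIJ : I ⊆ J := fun w hw =>
      (hJmem w).mpr ⟨le_trans (le_of_lt htp) ((memI w).mp hw).1, ((memI w).mp hw).2⟩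
    have hJI : J = I := hImax J hJpre hIJ
    have hmem : e z₀ t ∈ I := hJI ▸ left_mem_closedArc _ _
    have ht' := (memI _).mp hmem
    rw [Phi_e ⟨le_of_lt ht0, lt_of_lt_of_le htp (le_trans hpq (le_of_lt hq1))⟩] at ht'
    linarith [ht'.1]
  by_cases hS : (TT K z₀ ∩ Iio p).Nonempty
  · have hbdda : BddAbove (TT K z₀ ∩ Iio p) := ⟨p, fun s hs => le_of_lt hs.2⟩
    set r := sSup (TT K z₀ ∩ Iio p) with hrdef
    have hrp : r ≤ p := csSup_le hS (fun s hs => le_of_lt hs.2)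
    rcases lt_or_eq_of_le hrp with hlt | heq
    · refine ⟨min ((p - r)/2) (p/2), lt_min (by linarith) (by linarith), ?_, ?_⟩
      · have := min_le_right ((p - r)/2) (p/2); linarith
      · intro t htge htlt htK
        have h1 : t ≤ r := le_csSup hbdda ⟨htK, htlt⟩
        have h2 := min_le_left ((p - r)/2) (p/2)
        linarith
    · exfalso
      have hp_clos : p ∈ closure (TT L z₀) := by
        rw [Metric.mem_closure_iff]
        intro ε hε
        set δ := min (ε/2) (p/2) with hδdef
        have hδ0 : 0 < δ := lt_min (by linarith) (by linarith)
        have hδa : δ ≤ ε/2 := min_le_left _ _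
        have hδb : δ ≤ p/2 := min_le_right _ _
        obtain ⟨t, htmem, htgt⟩ := exists_lt_of_lt_csSup hS
          (show p - δ < sSup (TT K z₀ ∩ Iio p) by rw [← hrdef, heq]; linarith)
        obtain ⟨l, ⟨hl1, hl2⟩, hlL⟩ := hext t (by linarith) htmem.2 htmem.1
        refine ⟨l, hlL, ?_⟩
        rw [Real.dist_eq, abs_of_nonneg (by linarith : (0:ℝ) ≤ p - l)]
        linarith
      have hpL : p ∈ TT L z₀ := by
        rw [← (TT_isClosed hLcl).closure_eq]; exact hp_clos
      have hxL : x ∈ L := by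
        have := hpL.2
        rwa [hpdef, e_arg] at this
      exact (hdisj ▸ (⟨hx, hxL⟩ : x ∈ K ∩ L) : x ∈ (∅ : Set S1))
  · rw [not_nonempty_iff_eq_empty] at hS
    refine ⟨p/2, by linarith, by linarith, ?_⟩
    intro t _ htlt htK
    exact (hS ▸ (⟨htK, htlt⟩ : t ∈ TT K z₀ ∩ Iio p) : t ∈ (∅ : Set ℝ))

end Beyond

/-! ### Conjunct 2 -/

section Conj2

lemma conj2 {K L : Set S1} {z₀ : S1} {f : HomS1}
    (hKcl : IsClosed K) (hKne : K.Nonempty) (hLcl : IsClosed L) (hz₀L : z₀ ∈ L)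
    (hdisj : K ∩ L = ∅) (hfK : f '' K ⊆ K) (hfL : f '' L ⊆ L)
    {I : Set S1} (hIpre : PreGap K L I) (hImax : ∀ J, PreGap K L J → I ⊆ J → J = I) :
    ((f '' K) ∩ I).Nonempty := by
  by_contra hcon
  rw [not_nonempty_iff_eq_empty] at hcon
  obtain ⟨x, hx, y, hy, hIeq, hIL⟩ := hIpre
  have hIpre' : PreGap K L I := ⟨x, hx, y, hy, hIeq, hIL⟩
  have hxI : x ∈ I := by rw [hIeq]; exact left_mem_closedArc x y
  have hyI : y ∈ I := by rw [hIeq]; exact right_mem_closedArc x y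
  have hKsub : ¬ K ⊆ I := by
    intro hsub
    obtain ⟨k, hk⟩ := hKne
    have h1 : f k ∈ f '' K := ⟨k, hk, rfl⟩
    have h2 : f k ∈ I := hsub (hfK h1)
    exact (hcon ▸ (⟨h1, h2⟩ : f k ∈ f '' K ∩ I) : f k ∈ (∅ : Set S1))
  have hz₀K : z₀ ∉ K := fun h =>
    (hdisj ▸ (⟨h, hz₀L⟩ : z₀ ∈ K ∩ L) : z₀ ∈ (∅ : Set S1))
  have hz₀I : z₀ ∉ I := fun h =>
    (hIL ▸ (⟨h, hz₀L⟩ : z₀ ∈ I ∩ L) : z₀ ∈ (∅ : Set S1))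
  obtain ⟨hp0, hpq, hq1, hmemI⟩ := chart_closedArc (hIeq ▸ hz₀I)
  obtain ⟨εq, hεq0, hεq1, hεqK⟩ :=
    no_K_after hKcl hKne hLcl hz₀L hdisj hx hy hIeq hIL hImax
  obtain ⟨εp, hεp0, hεp1, hεpK⟩ :=
    no_K_before hKcl hKne hLcl hz₀L hdisj hx hy hIeq hIL hImax
  set p := argS1 (x - z₀) with hpdef
  set q := argS1 (y - z₀) with hqdef
  have hq0 : 0 ≤ q := by rw [hqdef]; exact argS1_nonneg _
  have memI : ∀ w, w ∈ I ↔ argS1 (w - z₀) ∈ Icc p q := by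
    intro w; rw [hIeq]; exact hmemI w
  have hexq : e z₀ p = x := by rw [hpdef]; exact e_arg z₀ x
  have heyq : e z₀ q = y := by rw [hqdef]; exact e_arg z₀ y
  set ρ := f.symm x with hρdef
  have hfρ : f ρ = x := f.apply_symm_apply x
  have hρK : ρ ∉ K := by
    intro h
    exact (hcon ▸ (⟨⟨ρ, h, hfρ⟩, hxI⟩ : x ∈ f '' K ∩ I) : x ∈ (∅ : Set S1))
  by_cases hgapL : (gap K ρ ∩ L).Nonempty
  · -- CASE B : the gap of the preimage point meets L
    obtain ⟨l₀, hl₀g, hl₀L⟩ := hgapL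
    have hl₀K : l₀ ∉ K := not_mem_K_of_mem_L hdisj hl₀L
    have hdsS : gap K ρ ∈ SigmaL K L := by
      rw [← gap_eq_of_mem hKcl hKne hρK hl₀K hl₀g]
      exact SigmaL_gap_mem hl₀L
    set V := f '' gap K ρ with hVdef
    have hVopen : IsOpen V := f.isOpenMap _ gap_isOpen
    have hxV : x ∈ V := ⟨ρ, mem_gap_self hKcl hKne hρK, hfρ⟩
    have hfrV : frontier V ⊆ f '' K := by
      rw [hVdef, ← f.image_frontier]
      exact image_mono (frontier_gap_subset_K hKcl hKne hρK)
    have hIV : I ⊆ V := by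
      apply trick_open (hIeq ▸ closedArc_preconn x y) hVopen ⟨x, hxI, hxV⟩
      apply eq_empty_of_subset_empty
      rintro a ⟨ha1, ha2⟩
      exact (hcon ▸ (⟨hfrV ha2, ha1⟩ : a ∈ f '' K ∩ I) : a ∈ (∅ : Set S1))
    have hgcont : Continuous (fun t : ℝ => e z₀ t) := e_continuous z₀
    have hgpre : IsOpen ((fun t : ℝ => e z₀ t) ⁻¹' V) := hVopen.preimage hgcont
    have hqpre : q ∈ (fun t : ℝ => e z₀ t) ⁻¹' V := by
      show e z₀ q ∈ V
      rw [heyq]; exact hIV hyI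
    obtain ⟨δq, hδq0, hδqball⟩ := Metric.isOpen_iff.mp hgpre q hqpre
    have hppre : p ∈ (fun t : ℝ => e z₀ t) ⁻¹' V := by
      show e z₀ p ∈ V
      rw [hexq]; exact hIV hxI
    obtain ⟨δp, hδp0, hδpball⟩ := Metric.isOpen_iff.mp hgpre p hppre
    -- the point just after y
    set ε1 := min εq δq / 2 with hε1def
    have hε10 : 0 < ε1 := by
      have := lt_min hεq0 hδq0
      rw [hε1def]; linarith
    have hε1q : ε1 < εq := by
      have := min_le_left εq δq
      rw [hε1def]; linarith
    have hε1δ : ε1 < δq := by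
      have := min_le_right εq δq
      rw [hε1def]; linarith
    have hq1' : q + ε1 < 1 := by linarith
    set wp := e z₀ (q + ε1) with hwpdef
    have hwpV : wp ∈ V := by
      apply hδqball
      rw [Metric.mem_ball, Real.dist_eq, show q + ε1 - q = ε1 from by ring,
        abs_of_pos hε10]
      exact hε1δ
    have hwpK : wp ∉ K := by
      intro h
      have hmem : q + ε1 ∈ TT K z₀ := ⟨⟨by linarith, by linarith⟩, h⟩
      exact hεqK _ (by linarith) (by linarith) hmem
    -- the point just before x
    set ε2 := min εp δp / 2 with hε2def
    have hε20 : 0 < ε2 := by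
      have := lt_min hεp0 hδp0
      rw [hε2def]; linarith
    have hε2p : ε2 < εp := by
      have := min_le_left εp δp
      rw [hε2def]; linarith
    have hε2δ : ε2 < δp := by
      have := min_le_right εp δp
      rw [hε2def]; linarith
    have hp2' : 0 < p - ε2 := by linarith
    set wm := e z₀ (p - ε2) with hwmdef
    have hwmV : wm ∈ V := by
      apply hδpball
      rw [Metric.mem_ball, Real.dist_eq, show p - ε2 - p = -ε2 from by ring, abs_neg,
        abs_of_pos hε20]
      exact hε2δ
    have hwmK : wm ∉ K := by
      intro h
      have hmem : p - ε2 ∈ TT K z₀ := ⟨⟨by linarith, by linarith⟩, h⟩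
      exact hεpK _ (by linarith) (by linarith) hmem
    -- the gaps at wp and wm are inside V
    have hδpV : gap K wp ⊆ V := by
      apply trick_open gap_preconn hVopen ⟨wp, mem_gap_self hKcl hKne hwpK, hwpV⟩
      apply eq_empty_of_subset_empty
      rintro a ⟨ha1, ha2⟩
      have haK : a ∈ K := hfK (hfrV ha2)
      exact (gap_inter_K hKcl hKne hwpK ▸ (⟨ha1, haK⟩ : a ∈ gap K wp ∩ K) :
        a ∈ (∅ : Set S1))
    have hδmV : gap K wm ⊆ V := by
      apply trick_open gap_preconn hVopen ⟨wm, mem_gap_self hKcl hKne hwmK, hwmV⟩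
      apply eq_empty_of_subset_empty
      rintro a ⟨ha1, ha2⟩
      have haK : a ∈ K := hfK (hfrV ha2)
      exact (gap_inter_K hKcl hKne hwmK ▸ (⟨ha1, haK⟩ : a ∈ gap K wm ∩ K) :
        a ∈ (∅ : Set S1))
    have hewp : ∀ s : ℝ, e wp s = e z₀ (q + ε1 + s) := by
      intro s; rw [hwpdef, e_add]
    have hewm : ∀ s : ℝ, e wm s = e z₀ (p - ε2 + s) := by
      intro s; rw [hwmdef, e_add]
    -- the top endpoint of the gap at wp is y
    have hcp : gc K wp = 1 - ε1 := by
      apply le_antisymm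
      · by_contra hgt
        push_neg at hgt
        have htT : gc K wp ∈ TT K wp := gc_mem hKcl hKne
        have ht1 : gc K wp < 1 := (TT_subset hwpK htT).2
        have hval : e z₀ (q + ε1 + gc K wp - 1) ∈ K := by
          have h1 : e wp (gc K wp) = e z₀ (q + ε1 + gc K wp) := hewp _
          have h2 : e z₀ (q + ε1 + gc K wp) = e z₀ (q + ε1 + gc K wp - 1) := by
            conv_lhs => rw [show q + ε1 + gc K wp = (q + ε1 + gc K wp - 1) + 1 from by ring]
            rw [e_add_one]
          rw [← h2, ← h1]
          exact htT.2
        have hmem : q + ε1 + gc K wp - 1 ∈ TT K z₀ := ⟨⟨by linarith, by linarith⟩, hval⟩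
        exact hεqK _ (by linarith) (by linarith) hmem
      · apply le_gc
        refine ⟨⟨by linarith, by linarith⟩, ?_⟩
        have h1 : e wp (1 - ε1) = e z₀ (q + ε1 + (1 - ε1)) := hewp _
        rw [show q + ε1 + (1 - ε1) = q + 1 from by ring, e_add_one, heyq] at h1
        rw [h1]
        exact hy
    -- the bottom endpoint of the gap at wm is x
    have hbm : gb K wm = ε2 := by
      apply le_antisymm
      · apply gb_le
        refine ⟨⟨by linarith, by linarith⟩, ?_⟩
        have h1 : e wm ε2 = e z₀ (p - ε2 + ε2) := hewm _
        rw [show p - ε2 + ε2 = p from by ring, hexq] at h1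
        rw [h1]
        exact hx
      · by_contra hgt
        push_neg at hgt
        have htT : gb K wm ∈ TT K wm := gb_mem hKcl hKne
        have ht0 : 0 < gb K wm := (TT_subset hwmK htT).1
        have hval : e z₀ (p - ε2 + gb K wm) ∈ K := by
          have h1 : e wm (gb K wm) = e z₀ (p - ε2 + gb K wm) := hewm _
          rw [← h1]
          exact htT.2
        have hmem : p - ε2 + gb K wm ∈ TT K z₀ := ⟨⟨by linarith, by linarith⟩, hval⟩
        exact hεpK _ (by linarith) (by linarith) hmem
    -- the gap at wp meets L
    have hδpL : (gap K wp ∩ L).Nonempty := by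
      by_contra hemp
      rw [not_nonempty_iff_eq_empty] at hemp
      have hz₀δ : z₀ ∉ gap K wp := fun h =>
        (hemp ▸ (⟨h, hz₀L⟩ : z₀ ∈ gap K wp ∩ L) : z₀ ∈ (∅ : Set S1))
      have hbp0 : 0 < gb K wp := gb_pos hKcl hKne hwpK
      have hble : gb K wp ≤ 1 - q - ε1 := by
        by_contra hgt
        push_neg at hgt
        apply hz₀δ
        refine ⟨1 - q - ε1, ⟨by rw [hcp]; linarith, hgt⟩, ?_⟩
        rw [hewp, show q + ε1 + (1 - q - ε1) = 1 from by ring, e_one]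
      have hblt : gb K wp < 1 - q - ε1 := by
        rcases lt_or_eq_of_le hble with h | h
        · exact h
        · exfalso
          have h1 : e wp (gb K wp) ∈ K := gap_endpoint_b_mem hKcl hKne
          rw [hewp, h, show q + ε1 + (1 - q - ε1) = 1 from by ring, e_one] at h1
          exact hz₀K h1
      set Qh := q + ε1 + gb K wp with hQhdef
      have hQh1 : Qh < 1 := by rw [hQhdef]; linarith
      have hQhq : q < Qh := by rw [hQhdef]; linarith
      have hQhK : e z₀ Qh ∈ K := by
        have h1 : e wp (gb K wp) ∈ K := gap_endpoint_b_mem hKcl hKne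
        rwa [hewp] at h1
      obtain ⟨hJim, hJmem, hJz₀⟩ :=
        closedArc_of_chart (z := z₀) hp0 (le_of_lt (lt_of_le_of_lt hpq hQhq)) hQh1
      have hJbL : closedArc (e z₀ p) (e z₀ Qh) ∩ L = ∅ := by
        apply eq_empty_of_subset_empty
        rintro w' ⟨hw'1, hw'2⟩
        have hs := (hJmem w').mp hw'1
        have hw'z : e z₀ (argS1 (w' - z₀)) = w' := e_arg z₀ w'
        rcases le_or_gt (argS1 (w' - z₀)) q with h | h
        · exact (hIL ▸ (⟨(memI w').mpr ⟨hs.1, h⟩, hw'2⟩ : w' ∈ I ∩ L) : w' ∈ (∅ : Set S1))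
        · have hw'eq : e wp (argS1 (w' - z₀) - q - ε1) = w' := by
            rw [hewp, show q + ε1 + (argS1 (w' - z₀) - q - ε1) = argS1 (w' - z₀) from by ring]
            exact hw'z
          rcases lt_or_eq_of_le hs.2 with h2 | h2
          · have hmem : w' ∈ gap K wp := by
              rw [← hw'eq]
              refine ⟨argS1 (w' - z₀) - q - ε1, ⟨by rw [hcp]; linarith, ?_⟩, rfl⟩
              rw [hQhdef] at h2; linarith
            exact (hemp ▸ (⟨hmem, hw'2⟩ : w' ∈ gap K wp ∩ L) : w' ∈ (∅ : Set S1))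
          · have hw'K : w' ∈ K := by
              rw [← hw'z, h2]
              exact hQhK
            exact (hdisj ▸ (⟨hw'K, hw'2⟩ : w' ∈ K ∩ L) : w' ∈ (∅ : Set S1))
      have hJbpre : PreGap K L (closedArc (e z₀ p) (e z₀ Qh)) :=
        ⟨e z₀ p, by rw [hexq]; exact hx, e z₀ Qh, hQhK, rfl, hJbL⟩
      have hIJb : I ⊆ closedArc (e z₀ p) (e z₀ Qh) := fun w' hw' =>
        (hJmem w').mpr ⟨((memI w').mp hw').1, le_trans ((memI w').mp hw').2 (le_of_lt hQhq)⟩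
      have hJbI := hImax _ hJbpre hIJb
      have hmem2 : e z₀ Qh ∈ I := by
        rw [← hJbI]
        exact right_mem_closedArc _ _
      have hmem3 := (memI _).mp hmem2
      rw [Phi_e ⟨by linarith, hQh1⟩] at hmem3
      linarith [hmem3.2]
    -- the gap at wm meets L
    have hδmL : (gap K wm ∩ L).Nonempty := by
      by_contra hemp
      rw [not_nonempty_iff_eq_empty] at hemp
      have hz₀δ : z₀ ∉ gap K wm := fun h =>
        (hemp ▸ (⟨h, hz₀L⟩ : z₀ ∈ gap K wm ∩ L) : z₀ ∈ (∅ : Set S1))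
      have hcm1 : gc K wm < 1 := gc_lt_one hKcl hKne hwmK
      have hcge : 1 + ε2 - p ≤ gc K wm := by
        by_contra hgt
        push_neg at hgt
        apply hz₀δ
        refine ⟨ε2 - p, ⟨by linarith, by rw [hbm]; linarith⟩, ?_⟩
        rw [hewm, show p - ε2 + (ε2 - p) = 0 from by ring, e_zero]
      have hPh0 : 0 < p - ε2 + gc K wm - 1 := by
        rcases lt_or_eq_of_le hcge with h | h
        · linarith
        · exfalso
          have h1 : e wm (gc K wm) ∈ K := gap_endpoint_c_mem hKcl hKne
          rw [hewm, ← h, show p - ε2 + (1 + ε2 - p) = 1 from by ring, e_one] at h1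
          exact hz₀K h1
      set Ph := p - ε2 + gc K wm - 1 with hPhdef
      have hPhp : Ph < p := by rw [hPhdef]; linarith
      have hPhK : e z₀ Ph ∈ K := by
        have h1 : e wm (gc K wm) ∈ K := gap_endpoint_c_mem hKcl hKne
        have h2 : e wm (gc K wm) = e z₀ Ph := by
          rw [hewm, show p - ε2 + gc K wm = Ph + 1 from by rw [hPhdef]; ring, e_add_one]
        rwa [h2] at h1
      obtain ⟨hJim, hJmem, hJz₀⟩ :=
        closedArc_of_chart (z := z₀) hPh0 (le_trans (le_of_lt hPhp) hpq) hq1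
      have hJbL : closedArc (e z₀ Ph) (e z₀ q) ∩ L = ∅ := by
        apply eq_empty_of_subset_empty
        rintro w' ⟨hw'1, hw'2⟩
        have hs := (hJmem w').mp hw'1
        have hw'z : e z₀ (argS1 (w' - z₀)) = w' := e_arg z₀ w'
        rcases le_or_gt p (argS1 (w' - z₀)) with h | h
        · exact (hIL ▸ (⟨(memI w').mpr ⟨h, hs.2⟩, hw'2⟩ : w' ∈ I ∩ L) : w' ∈ (∅ : Set S1))
        · have hw'eq : e wm (argS1 (w' - z₀) - p + ε2) = w' := by
            rw [hewm, show p - ε2 + (argS1 (w' - z₀) - p + ε2) = argS1 (w' - z₀) from by ring]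
            exact hw'z
          rcases lt_or_eq_of_le hs.1 with h2 | h2
          · have hmem : w' ∈ gap K wm := by
              rw [← hw'eq]
              refine ⟨argS1 (w' - z₀) - p + ε2, ⟨?_, by rw [hbm]; linarith⟩, rfl⟩
              rw [hPhdef] at h2; linarith
            exact (hemp ▸ (⟨hmem, hw'2⟩ : w' ∈ gap K wm ∩ L) : w' ∈ (∅ : Set S1))
          · have hw'K : w' ∈ K := by
              rw [← hw'z, ← h2]
              exact hPhK
            exact (hdisj ▸ (⟨hw'K, hw'2⟩ : w' ∈ K ∩ L) : w' ∈ (∅ : Set S1))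
      have hJbpre : PreGap K L (closedArc (e z₀ Ph) (e z₀ q)) :=
        ⟨e z₀ Ph, hPhK, e z₀ q, by rw [heyq]; exact hy, rfl, hJbL⟩
      have hIJb : I ⊆ closedArc (e z₀ Ph) (e z₀ q) := fun w' hw' =>
        (hJmem w').mpr ⟨le_trans (le_of_lt hPhp) ((memI w').mp hw').1, ((memI w').mp hw').2⟩
      have hJbI := hImax _ hJbpre hIJb
      have hmem2 : e z₀ Ph ∈ I := by
        rw [← hJbI]
        exact left_mem_closedArc _ _
      have hmem3 := (memI _).mp hmem2
      rw [Phi_e ⟨le_of_lt hPh0, by linarith⟩] at hmem3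
      linarith [hmem3.1]
    -- both gaps are members of SigmaL
    obtain ⟨lp, hlpg, hlpL⟩ := hδpL
    have hdpS : gap K wp ∈ SigmaL K L := by
      rw [← gap_eq_of_mem hKcl hKne hwpK (not_mem_K_of_mem_L hdisj hlpL) hlpg]
      exact SigmaL_gap_mem hlpL
    obtain ⟨lm, hlmg, hlmL⟩ := hδmL
    have hdmS : gap K wm ∈ SigmaL K L := by
      rw [← gap_eq_of_mem hKcl hKne hwmK (not_mem_K_of_mem_L hdisj hlmL) hlmg]
      exact SigmaL_gap_mem hlmL
    -- uniqueness of the swallowed gap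
    obtain ⟨γ, hgS, hγsub, huniq⟩ :=
      swallow_perm hKcl hKne hLcl hdisj hfK hfL (gap K wp) hdpS
    have hγδs : γ = gap K ρ :=
      swallow_source_unique hKcl hKne hdisj hgS hdsS hdpS hγsub hδpV
    have hδeq : gap K wm = gap K wp := by
      apply huniq (gap K wm) hdmS
      rw [hγδs]
      exact hδmV
    -- extract parameters : wm sits inside the gap at wp
    have hwmδp : wm ∈ gap K wp := by
      rw [← hδeq]
      exact mem_gap_self hKcl hKne hwmK
    set t1 := p - ε2 - q - ε1 + 1 with ht1def
    have ht1pos : 0 < t1 := by rw [ht1def]; linarith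
    have ht1lt : t1 < 1 := by rw [ht1def]; linarith
    have hwmt1 : e wp t1 = wm := by
      rw [hewp, show q + ε1 + t1 = (p - ε2) + 1 from by rw [ht1def]; ring, e_add_one, hwmdef]
    obtain ⟨t, ⟨htl, htu⟩, hteq⟩ := hwmδp
    have hbp1' : gb K wp < 1 :=
      lt_of_le_of_lt (gb_le_gc hKcl hKne) (gc_lt_one hKcl hKne hwpK)
    have hε1lt1 : ε1 < 1 := by linarith
    have htgt : -ε1 < t := by rw [hcp] at htl; linarith
    have htlt1 : t < 1 := lt_trans htu hbp1'
    have htt1 : t = t1 := by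
      have h1 : e wp t = e wp t1 := by rw [hteq, hwmt1]
      obtain ⟨n, hn⟩ := e_eq_iff.mp h1
      have hnr : (n:ℝ) = t - t1 := by linarith [hn]
      have hn2 : (-2:ℝ) < n := by rw [hnr]; linarith
      have hn1 : (n:ℝ) < 1 := by rw [hnr]; linarith
      have hncase : n = -1 ∨ n = 0 := by
        have h2' : (-2:ℤ) < n := by exact_mod_cast hn2
        have h1' : n < (1:ℤ) := by exact_mod_cast hn1
        omega
      rcases hncase with h | h
      · exfalso
        have : t = t1 - 1 := by rw [hn, h]; push_cast; ring
        rw [ht1def] at this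
        -- t = p - ε2 - q - ε1 ≤ -ε1 - ε2 < -ε1, contradicting htgt
        have : t < -ε1 := by rw [this]; linarith
        linarith
      · rw [hn, h]; push_cast; ring
    have ht1bp : t1 < gb K wp := htt1 ▸ htu
    set tx := p - q - ε1 + 1 with htxdef
    have htx1 : tx < 1 := by rw [htxdef]; linarith
    have htx0 : 0 < tx := by rw [htxdef]; linarith
    have htxK : tx ∈ TT K wp := by
      refine ⟨⟨le_of_lt htx0, le_of_lt htx1⟩, ?_⟩
      rw [hewp, show q + ε1 + tx = p + 1 from by rw [htxdef]; ring, e_add_one, hexq]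
      exact hx
    have hbptx : gb K wp ≤ tx := gb_le htxK
    have hbpeq : gb K wp = tx := by
      rcases lt_or_eq_of_le hbptx with h | h
      · exfalso
        have hval1 : p - ε2 < q + ε1 + gb K wp - 1 := by rw [ht1def] at ht1bp; linarith
        have hval2 : q + ε1 + gb K wp - 1 < p := by rw [htxdef] at h; linarith
        have hvalK : e z₀ (q + ε1 + gb K wp - 1) ∈ K := by
          have h1 : e wp (gb K wp) ∈ K := gap_endpoint_b_mem hKcl hKne
          rw [hewp, show q + ε1 + gb K wp = (q + ε1 + gb K wp - 1) + 1 from by ring,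
            e_add_one] at h1
          exact h1
        have hmem : q + ε1 + gb K wp - 1 ∈ TT K z₀ := ⟨⟨by linarith, by linarith⟩, hvalK⟩
        exact hεpK _ (by linarith) hval2 hmem
      · exact h
    -- conclude : K is contained in I
    apply hKsub
    intro k hk
    have hknotδ : k ∉ gap K wp := fun h =>
      (gap_inter_K hKcl hKne hwpK ▸ (⟨h, hk⟩ : k ∈ gap K wp ∩ K) : k ∈ (∅ : Set S1))
    have hkc : k ∈ e wp '' Icc (gb K wp) (gc K wp) := by
      rw [← compl_gap hKcl hKne hwpK]
      exact hknotδ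
    obtain ⟨s, ⟨hs1, hs2⟩, hseq⟩ := hkc
    rw [hbpeq, htxdef] at hs1
    rw [hcp] at hs2
    have hval : e z₀ (q + ε1 + s - 1) = k := by
      have h1 : e z₀ (q + ε1 + s - 1) = e z₀ (q + ε1 + s) := by
        conv_rhs => rw [show q + ε1 + s = (q + ε1 + s - 1) + 1 from by ring]
        rw [e_add_one]
      rw [h1, ← hewp s, hseq]
    have hb1 : p ≤ q + ε1 + s - 1 := by linarith
    have hb2 : q + ε1 + s - 1 ≤ q := by linarith
    refine (memI k).mpr ?_
    have harg : argS1 (k - z₀) = q + ε1 + s - 1 := by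
      rw [← hval]
      exact Phi_e ⟨by linarith, by linarith⟩
    rw [harg]
    exact ⟨hb1, hb2⟩
  · -- CASE A : the gap of the preimage point misses L
    rw [not_nonempty_iff_eq_empty] at hgapL
    have hb0 : 0 < gb K ρ := gb_pos hKcl hKne hρK
    have hc1 : gc K ρ < 1 := gc_lt_one hKcl hKne hρK
    have hbc : gb K ρ ≤ gc K ρ := gb_le_gc hKcl hKne
    rcases lt_or_eq_of_le hbc with hblt | hbeq
    · -- main case : b < c
      set u := e ρ (gc K ρ) with hudef
      set v := e ρ (gb K ρ) with hvdef
      have huK : u ∈ K := gap_endpoint_c_mem hKcl hKne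
      have hvK : v ∈ K := gap_endpoint_b_mem hKcl hKne
      have harg : argS1 (v - u) = gb K ρ - gc K ρ + 1 := by
        rw [hudef, hvdef, e_sub_e]
        have h1 : ((gb K ρ - gc K ρ : ℝ) : S1) = ((gb K ρ - gc K ρ + 1 : ℝ) : S1) :=
          (AddCircle.coe_add_period 1 (gb K ρ - gc K ρ)).symm
        rw [h1]
        exact argS1_coe ⟨by linarith, by linarith⟩
      have hJeq : closedArc u v = e ρ '' Icc (gc K ρ) (gb K ρ + 1) := by
        rw [closedArc_eq, harg]
        ext w'
        constructor
        · rintro ⟨s, hs, rfl⟩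
          refine ⟨gc K ρ + s, ⟨by linarith [hs.1], by linarith [hs.2]⟩, ?_⟩
          rw [hudef, e_add]
        · rintro ⟨t, ht, rfl⟩
          refine ⟨t - gc K ρ, ⟨by linarith [ht.1], by linarith [ht.2]⟩, ?_⟩
          rw [hudef, e_add, show gc K ρ + (t - gc K ρ) = t from by ring]
      have hρJ : ρ ∈ closedArc u v := by
        rw [hJeq]
        exact ⟨1, ⟨le_of_lt hc1, by linarith⟩, e_one ρ⟩
      have hJL : closedArc u v ∩ L = ∅ := by
        apply eq_empty_of_subset_empty
        rintro w' ⟨hw'1, hw'2⟩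
        rw [hJeq] at hw'1
        obtain ⟨t, ⟨ht1, ht2⟩, hteq⟩ := hw'1
        rcases lt_or_eq_of_le ht1 with h1 | h1
        · rcases lt_or_eq_of_le ht2 with h2 | h2
          · have hmem : w' ∈ gap K ρ := by
              refine ⟨t - 1, ⟨by linarith, by linarith⟩, ?_⟩
              have h3 := e_add_one ρ (t - 1)
              rw [show t - 1 + 1 = t from by ring] at h3
              rw [← h3]
              exact hteq
            exact (hgapL ▸ (⟨hmem, hw'2⟩ : w' ∈ gap K ρ ∩ L) : w' ∈ (∅ : Set S1))
          · have hw'v : w' = v := by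
              rw [← hteq, h2, hvdef, e_add_one]
            rw [hw'v] at hw'2
            exact (hdisj ▸ (⟨hvK, hw'2⟩ : v ∈ K ∩ L) : v ∈ (∅ : Set S1))
        · have hw'u : w' = u := by rw [← hteq, ← h1, hudef]
          rw [hw'u] at hw'2
          exact (hdisj ▸ (⟨huK, hw'2⟩ : u ∈ K ∩ L) : u ∈ (∅ : Set S1))
      have hJpre : PreGap K L (closedArc u v) := ⟨u, huK, v, hvK, rfl, hJL⟩
      have hfJ : PreGap K L (f '' closedArc u v) :=
        image_preGap hKcl hKne hLcl hdisj hfK hfL hJpre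
      obtain ⟨Jm, hJmMax, hsubm⟩ := exists_max_preGap hKcl hKne hLcl hz₀L hdisj hfJ
      have hxm : x ∈ Jm := hsubm ⟨ρ, hρJ, hfρ⟩
      have hJmI : Jm = I :=
        maxPreGap_eq_of_inter hLcl hz₀L hJmMax ⟨hIpre', hImax⟩ ⟨x, hxm, hxI⟩
      have hfu : f u ∈ f '' K ∩ I := by
        constructor
        · exact ⟨u, huK, rfl⟩
        · rw [← hJmI]
          exact hsubm ⟨u, left_mem_closedArc u v, rfl⟩
      exact (hcon ▸ hfu : f u ∈ (∅ : Set S1))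
    · -- degenerate case : b = c, so K is a single point
      exfalso
      apply hKsub
      have hKsing : ∀ k ∈ K, k = e ρ (gb K ρ) := by
        intro k hk
        have htk : argS1 (k - ρ) ∈ TT K ρ := arg_mem_TT (z₀ := ρ) hk
        have h1 : gb K ρ ≤ argS1 (k - ρ) := gb_le htk
        have h2 : argS1 (k - ρ) ≤ gc K ρ := le_gc htk
        have h3 : argS1 (k - ρ) = gb K ρ := le_antisymm (by rw [hbeq]; exact h2) h1
        have h4 : e ρ (argS1 (k - ρ)) = k := e_arg ρ k
        rw [h3] at h4
        exact h4.symm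
      intro k hk
      have h1 : k = e ρ (gb K ρ) := hKsing k hk
      have h2 : x = e ρ (gb K ρ) := hKsing x hx
      rw [h1, ← h2]
      exact hxI

end Conj2

/-! ### Minimal sets -/

lemma minimal_disjoint {F : Set HomS1} {K K' : Set S1}
    (hK : IsMinimalInvariant F K) (hK' : IsMinimalInvariant F K') (hne : K' ≠ K) :
    K ∩ K' = ∅ := by
  by_contra h
  have hne2 : (K ∩ K').Nonempty := nonempty_iff_ne_empty.mpr h
  have hcl : IsClosed (K ∩ K') := hK.2.1.inter hK'.2.1
  have hinv : InvariantUnder F (K ∩ K') := by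
    intro f hf
    rintro a ⟨b, hb, rfl⟩
    exact ⟨hK.2.2.1 f hf ⟨b, hb.1, rfl⟩, hK'.2.2.1 f hf ⟨b, hb.2, rfl⟩⟩
  have h1 : K ∩ K' = K := hK.2.2.2 (K ∩ K') inter_subset_left hne2 hcl hinv
  have h2 : K ∩ K' = K' := hK'.2.2.2 (K ∩ K') inter_subset_right hne2 hcl hinv
  exact hne (h2.symm.trans h1)


end L33

open L33

/-- **Lemma 3.3.** If the collection of `F`-invariant minimal sets is finite with at
least two elements, then for every minimal set `K`, every arc `I ∈ E_K` and every
`f ∈ F`, `f` maps `I` into some arc of `E_K` and maps some arc of `E_K` into `I`. -/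
theorem statement6 (F : Set HomS1) (hfin : (minimalSets F).Finite)
    (hcard : 2 ≤ (minimalSets F).ncard) :
    ∀ K ∈ minimalSets F, ∀ I ∈ EK F K, ∀ f ∈ F,
      (∃ J ∈ EK F K, f '' I ⊆ J) ∧ (∃ J ∈ EK F K, f '' J ⊆ I) := by
  intro K hK I hIEK f hf
  classical
  have hKmin : IsMinimalInvariant F K := hK
  have hKcl : IsClosed K := hKmin.2.1
  have hKne : K.Nonempty := hKmin.1
  set L := ⋃₀ (minimalSets F \ {K}) with hLdef
  have hLcl : IsClosed L := by
    rw [hLdef, sUnion_eq_biUnion]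
    apply Set.Finite.isClosed_biUnion (hfin.subset diff_subset)
    intro K' hK'
    exact (hK'.1 : IsMinimalInvariant F K').2.1
  have hLne : L.Nonempty := by
    have h2 : 1 < (minimalSets F).ncard := lt_of_lt_of_le one_lt_two hcard
    obtain ⟨K', hK'mem, hK'ne⟩ := Set.exists_ne_of_one_lt_ncard h2 K
    obtain ⟨w, hw⟩ := (hK'mem : IsMinimalInvariant F K').1
    exact ⟨w, ⟨K', ⟨hK'mem, fun h => hK'ne (mem_singleton_iff.mp h)⟩, hw⟩⟩
  obtain ⟨z₀, hz₀L⟩ := hLne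
  have hdisj : K ∩ L = ∅ := by
    apply eq_empty_of_subset_empty
    rintro w ⟨hw1, hw2⟩
    obtain ⟨K', hK'mem, hwK'⟩ := hw2
    have hK'ne : K' ≠ K := fun h => hK'mem.2 (mem_singleton_iff.mpr h)
    have hd := minimal_disjoint hKmin (hK'mem.1 : IsMinimalInvariant F K') hK'ne
    exact (hd ▸ (⟨hw1, hwK'⟩ : w ∈ K ∩ K') : w ∈ (∅ : Set S1))
  have hfK : f '' K ⊆ K := hKmin.2.2.1 f hf
  have hfL : f '' L ⊆ L := by
    rintro a ⟨b, hb, rfl⟩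
    obtain ⟨K', hK'mem, hbK'⟩ := hb
    exact ⟨K', hK'mem, (hK'mem.1 : IsMinimalInvariant F K').2.2.1 f hf ⟨b, hbK', rfl⟩⟩
  have htrans : ∀ J, IsGapArc F K J ↔ PreGap K L J := by
    intro J
    constructor
    · rintro ⟨⟨x, hx, y, hy, hJeq⟩, hsep⟩
      refine ⟨x, hx, y, hy, hJeq, ?_⟩
      apply eq_empty_of_subset_empty
      rintro w ⟨hw1, hw2⟩
      obtain ⟨K', hK'mem, hwK'⟩ := hw2
      have hK'ne : K' ≠ K := fun h => hK'mem.2 (mem_singleton_iff.mpr h)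
      have hsep' := hsep K' hK'mem.1 hK'ne
      exact (hsep' ▸ (⟨hw1, hwK'⟩ : w ∈ J ∩ K') : w ∈ (∅ : Set S1))
    · rintro ⟨x, hx, y, hy, hJeq, hJL⟩
      refine ⟨⟨x, hx, y, hy, hJeq⟩, ?_⟩
      intro K' hK' hne
      apply eq_empty_of_subset_empty
      rintro w ⟨hw1, hw2⟩
      have hwL : w ∈ L := ⟨K', ⟨hK', fun h => hne (mem_singleton_iff.mp h)⟩, hw2⟩
      exact (hJL ▸ (⟨hw1, hwL⟩ : w ∈ J ∩ L) : w ∈ (∅ : Set S1))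
  have hItoMax : ∀ J, J ∈ EK F K ↔ MaxPreGap K L J := by
    intro J
    constructor
    · rintro ⟨h1, h2⟩
      exact ⟨(htrans J).mp h1, fun J' hJ' hsub => h2 J' ((htrans J').mpr hJ') hsub⟩
    · rintro ⟨h1, h2⟩
      exact ⟨(htrans J).mpr h1, fun J' hJ' hsub => h2 J' ((htrans J').mp hJ') hsub⟩
  have hImaxP : MaxPreGap K L I := (hItoMax I).mp hIEK
  constructor
  · -- conjunct 1
    have hfI : PreGap K L (f '' I) :=
      image_preGap hKcl hKne hLcl hdisj hfK hfL hImaxP.1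
    obtain ⟨J, hJmax, hsub⟩ := exists_max_preGap hKcl hKne hLcl hz₀L hdisj hfI
    exact ⟨J, (hItoMax J).mpr hJmax, hsub⟩
  · -- conjunct 2
    obtain ⟨k, hkfK, hkI⟩ :=
      conj2 hKcl hKne hLcl hz₀L hdisj hfK hfL hImaxP.1 hImaxP.2
    obtain ⟨u, hu, rfl⟩ := hkfK
    obtain ⟨J, hJmax, huJ⟩ := exists_max_preGap_mem hKcl hKne hLcl hz₀L hdisj hu
    have hfJ : PreGap K L (f '' J) :=
      image_preGap hKcl hKne hLcl hdisj hfK hfL hJmax.1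
    obtain ⟨J', hJ'max, hsub'⟩ := exists_max_preGap hKcl hKne hLcl hz₀L hdisj hfJ
    have hfuJ' : f u ∈ J' := hsub' ⟨u, huJ, rfl⟩
    have hJ'I : J' = I :=
      maxPreGap_eq_of_inter hLcl hz₀L hJ'max hImaxP ⟨f u, hfuJ', hkI⟩
    refine ⟨J, (hItoMax J).mpr hJmax, ?_⟩
    rw [← hJ'I]
    exact hsub'


end
end
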